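/- arXiv:hep-th/9405093 — 6 statements merged into one kernel-verified Lean document; each statement's English description precedes it below -/
import Mathlib

section
/- Let Ψ be the pairing defined on pairs (r, f) with r ∈ ℤ and f ∈ ℂ[X] by: Ψ((a,p),(b,q)) = ∑_{j=1}^{a} p(−j)·q(a−j) if a = −b and a > 0; Ψ((a,p),(b,q)) = −∑_{j=1}^{−a} q(−j)·p(−a−j) if a = −b and a < 0; and Ψ((a,p),(b,q)) = 0 otherwise. Let the bracket be β((r,f),(s,g)) = (r+s, f(X+s)·g(X) − f(X)·g(X+r)). Then for all r, s, t ∈ ℤ and all f, g, h ∈ ℂ[X], the cyclic sum Ψ(β((r,f),(s,g)), (t,h)) + Ψ(β((s,g),(t,h)), (r,f)) + Ψ(β((t,h),(r,f)), (s,g)) = 0. That is, Ψ is a two-cocycle on the Lie algebra of differential operators on the circle, so the W_{1+∞} bracket with central term C·Ψ satisfies the Jacobi identity. -/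
open Polynomial

/-- The non-central part of the `W_{1+∞}` bracket:
`β((r,f),(s,g)) = (r+s, f(X+s)·g(X) − f(X)·g(X+r))`. -/
noncomputable def Wbracket (x y : ℤ × Polynomial ℂ) : ℤ × Polynomial ℂ :=
  (x.1 + y.1,
    x.2.comp (X + C (y.1 : ℂ)) * y.2 - x.2 * y.2.comp (X + C (x.1 : ℂ)))

/-- The two-cocycle `Ψ` of the `W_{1+∞}` algebra:
`Ψ((a,p),(b,q)) = ∑_{j=1}^{a} p(−j)·q(a−j)` if `a = −b` and `a > 0`,
`Ψ((a,p),(b,q)) = −∑_{j=1}^{−a} q(−j)·p(−a−j)` if `a = −b` and `a < 0`,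
and `0` otherwise. -/
noncomputable def Psi (x y : ℤ × Polynomial ℂ) : ℂ :=
  if x.1 = -y.1 ∧ 0 < x.1 then
    ∑ j ∈ Finset.Icc 1 x.1.toNat, x.2.eval (-(j : ℂ)) * y.2.eval ((x.1 : ℂ) - (j : ℂ))
  else if x.1 = -y.1 ∧ x.1 < 0 then
    -∑ j ∈ Finset.Icc 1 (-x.1).toNat,
        y.2.eval (-(j : ℂ)) * x.2.eval (((-x.1 : ℤ) : ℂ) - (j : ℂ))
  else 0



/-- Signed sum `∑_{j=1}^{n} F j`, equal to `-∑_{j=n+1}^{0} F j` for `n < 0`. -/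
noncomputable def Sfun (n : ℤ) (F : ℤ → ℂ) : ℂ :=
  if 0 ≤ n then ∑ j ∈ Finset.range n.toNat, F ((j : ℤ) + 1)
  else -∑ j ∈ Finset.range (-n).toNat, F (-(j : ℤ))

lemma Sfun_zero (F : ℤ → ℂ) : Sfun 0 F = 0 := by simp [Sfun]

lemma Sfun_succ (n : ℤ) (F : ℤ → ℂ) : Sfun (n + 1) F = Sfun n F + F (n + 1) := by
  rcases le_or_gt 0 n with h | h
  · have h1 : (0:ℤ) ≤ n + 1 := by omega
    have h2 : (n + 1).toNat = n.toNat + 1 := by omega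
    rw [Sfun, Sfun, if_pos h, if_pos h1, h2, Finset.sum_range_succ]
    congr 2
    omega
  · have h1 : ¬ (0:ℤ) ≤ n := by omega
    rcases le_or_gt 0 (n + 1) with h2 | h2
    · have hn : n = -1 := by omega
      subst hn; simp [Sfun]
    · have h3 : ¬ (0:ℤ) ≤ n + 1 := by omega
      have h4 : (-n).toNat = (-(n + 1)).toNat + 1 := by omega
      rw [Sfun, Sfun, if_neg h1, if_neg h3, h4, Finset.sum_range_succ]
      have h5 : -(((-(n + 1)).toNat : ℕ) : ℤ) = n + 1 := by omega
      rw [h5]; ring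

lemma Sfun_pred (n : ℤ) (F : ℤ → ℂ) : Sfun (n - 1) F = Sfun n F - F n := by
  have := Sfun_succ (n - 1) F
  rw [sub_add_cancel] at this
  rw [this]; ring

/-- The key telescoping identity. -/
lemma Sfun_key (a b : ℤ) (F G : ℤ → ℂ) (n : ℤ) :
    Sfun n (fun j => F (j + a) - G (j + b)) =
      (Sfun (n + a) F - Sfun a F) - (Sfun (n + b) G - Sfun b G) := by
  induction n using Int.induction_on with
  | zero => simp [Sfun_zero]
  | succ k ih =>
      rw [Sfun_succ, ih, show (k:ℤ) + 1 + a = (k + a) + 1 by ring,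
        show (k:ℤ) + 1 + b = (k + b) + 1 by ring, Sfun_succ, Sfun_succ]
      ring
  | pred k ih =>
      rw [show (-(k:ℤ) - 1) = (-(k:ℤ)) - 1 by ring, Sfun_pred, ih,
        show (-(k:ℤ) - 1 + a) = (-(k:ℤ) + a) - 1 by ring,
        show (-(k:ℤ) - 1 + b) = (-(k:ℤ) + b) - 1 by ring, Sfun_pred, Sfun_pred]
      ring

lemma Psi_eq (a b : ℤ) (p q : Polynomial ℂ) :
    Psi (a, p) (b, q) =
      if a = -b then Sfun a (fun j => p.eval (-(j : ℂ)) * q.eval ((a : ℂ) - (j : ℂ))) else 0 := by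
  by_cases hab : a = -b
  · rw [if_pos hab]
    rcases lt_trichotomy a 0 with h | h | h
    · rw [Psi, if_neg (by omega), if_pos (by exact ⟨hab, h⟩), Sfun,
        if_neg (by omega)]
      simp only
      congr 1
      rw [← Finset.Ico_add_one_right_eq_Icc, Finset.sum_Ico_eq_sum_range]
      rw [← Finset.sum_range_reflect]
      have hK : ((-a).toNat : ℤ) = -a := by omega
      refine Finset.sum_congr rfl (fun i hi => ?_)
      have hiK : i < (-a).toNat := Finset.mem_range.mp hi
      have h1 : 1 + ((-a).toNat + 1 - 1 - 1 - i) = (-a).toNat - i := by omega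
      rw [h1]
      have h2 : (((-a).toNat - i : ℕ) : ℤ) = -a - i := by omega
      have h3 : ((((-a).toNat - i : ℕ)) : ℂ) = -(a:ℂ) - (i:ℂ) := by
        have := congrArg (fun z : ℤ => (z : ℂ)) h2
        push_cast at this ⊢
        linear_combination this
      rw [h3]
      push_cast
      ring_nf
    · subst h; rw [Psi]; simp [Sfun]
    · rw [Psi, if_pos (by exact ⟨hab, h⟩), Sfun, if_pos (by omega)]
      simp only
      rw [← Finset.Ico_add_one_right_eq_Icc, Finset.sum_Ico_eq_sum_range]
      refine Finset.sum_congr rfl (fun i hi => ?_)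
      push_cast
      ring_nf
  · rw [if_neg hab, Psi, if_neg (by tauto), if_neg (by tauto)]

/-- `Ψ` is a two-cocycle: its cyclic sum against the `W_{1+∞}` bracket vanishes,
so the bracket with central term `C·Ψ` satisfies the Jacobi identity. -/
theorem Psi_is_two_cocycle (r s t : ℤ) (f g h : Polynomial ℂ) :
    Psi (Wbracket (r, f) (s, g)) (t, h) + Psi (Wbracket (s, g) (t, h)) (r, f)
      + Psi (Wbracket (t, h) (r, f)) (s, g) = 0 := by
  have w1 : Wbracket (r, f) (s, g)
      = (r + s, f.comp (X + C (s:ℂ)) * g - f * g.comp (X + C (r:ℂ))) := rfl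
  have w2 : Wbracket (s, g) (t, h)
      = (s + t, g.comp (X + C (t:ℂ)) * h - g * h.comp (X + C (s:ℂ))) := rfl
  have w3 : Wbracket (t, h) (r, f)
      = (t + r, h.comp (X + C (r:ℂ)) * f - h * f.comp (X + C (t:ℂ))) := rfl
  by_cases hc : r + s + t = 0
  · obtain rfl : t = -r - s := by omega
    rw [w1, w2, w3, Psi_eq, Psi_eq, Psi_eq, if_pos (by ring), if_pos (by ring),
      if_pos (by ring)]
    set Φ : ℤ → ℂ := fun j => f.eval (-(j:ℂ)) * g.eval (-(s:ℂ) - j) * h.eval ((r:ℂ) - j)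
      with hΦ
    set Φ' : ℤ → ℂ := fun j => f.eval (-(j:ℂ)) * g.eval ((r:ℂ) - j) * h.eval ((r:ℂ) + s - j)
      with hΦ'
    have i1 : (fun j : ℤ => (f.comp (X + C (s:ℂ)) * g - f * g.comp (X + C (r:ℂ))).eval (-(j:ℂ))
        * h.eval (((r + s : ℤ):ℂ) - (j:ℂ))) = fun j => Φ (j + (-s)) - Φ' (j + 0) := by
      funext j
      simp only [hΦ, hΦ', eval_mul, eval_sub, eval_comp, eval_add, eval_X, eval_C]
      push_cast
      ring_nf
    have i2 : (fun j : ℤ => (g.comp (X + C ((-r - s : ℤ):ℂ)) * h - g * h.comp (X + C (s:ℂ))).eval (-(j:ℂ))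
        * f.eval (((s + (-r - s) : ℤ):ℂ) - (j:ℂ))) = fun j => Φ (j + r) - Φ' (j + r) := by
      funext j
      simp only [hΦ, hΦ', eval_mul, eval_sub, eval_comp, eval_add, eval_X, eval_C]
      push_cast
      ring_nf
    have i3 : (fun j : ℤ => (h.comp (X + C (r:ℂ)) * f - h * f.comp (X + C ((-r - s : ℤ):ℂ))).eval (-(j:ℂ))
        * g.eval (((-r - s + r : ℤ):ℂ) - (j:ℂ))) = fun j => Φ (j + 0) - Φ' (j + (r + s)) := by
      funext j
      simp only [hΦ, hΦ', eval_mul, eval_sub, eval_comp, eval_add, eval_X, eval_C]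
      push_cast
      ring_nf
    rw [i1, i2, i3, Sfun_key, Sfun_key, Sfun_key]
    simp only [show r + s + -s = r from by ring, show s + (-r - s) + r = 0 from by ring,
      show r + s + 0 = r + s from by ring, show s + (-r - s) = -r from by ring,
      show -r - s + r + 0 = -s from by ring, show -r - s + r + (r + s) = r from by ring,
      Sfun_zero]
    simp only [show -r + r = 0 from by ring, Sfun_zero]
    ring
  · rw [w1, w2, w3, Psi_eq, Psi_eq, Psi_eq, if_neg (by omega), if_neg (by omega),
      if_neg (by omega)]
    norm_num
end

section
/- Let K ≥ 1 and s ≥ 0 be integers and let q be a real number with 0 < q < 1. For a finitely supported function n from the positive integers to ℕ, set α_s(n) = ∑_{t=s+1}^{∞} (t − s) · binomial(n_t + tK − 1, tK) · ∏_{u ≥ 1, u ≠ t} binomial(n_u + uK − 1, n_u) (the sum and product are finite since binomial(tK−1, tK) = 0 when n_t = 0 and binomial(uK−1, 0) = 1 when n_u = 0). Then ∑_{n} α_s(n) · q^{∑_{j≥1} j·n_j}, summed over all finitely supported n : ℤ_{>0} → ℕ, converges and equals (∑_{t=s+1}^{∞} (t − s) q^t / (1 − q^t)) · ∏_{u=1}^{∞}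 (1 − q^u)^{−Ku}, where the infinite product converges. -/
open Finset
open scoped ENNReal NNReal

/-- The multiplicity `α_s(n)` of null vectors for the monomial basis labeled by the
finitely supported function `n` (with `n t` generators of level `t`):
`α_s(n) = ∑_{t ≥ s+1} (t−s)·C(n_t + tK − 1, tK)·∏_{u ≥ 1, u ≠ t} C(n_u + uK − 1, n_u)`.
The sum and product are finite: the `t`-th summand vanishes when `n t = 0`
(since `C(tK−1, tK) = 0`) and the `u`-th factor is `1` when `n u = 0`. -/
noncomputable def alphaW (K s : ℕ) (n : ℕ →₀ ℕ) : ℕ :=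
  ∑ᶠ t ∈ {t : ℕ | s + 1 ≤ t},
    (t - s) * Nat.choose (n t + t * K - 1) (t * K) *
      ∏ᶠ u ∈ {u : ℕ | 1 ≤ u ∧ u ≠ t}, Nat.choose (n u + u * K - 1) (n u)


lemma sum_range_choose_add (M m : ℕ) :
    ∑ i ∈ range (m+1), (i+M).choose i = (m+M+1).choose m := by
  have h1 : ∀ i ∈ range (m+1), (i+M).choose i = (i+M).choose M := by
    intro i _
    have := Nat.choose_symm (Nat.le_add_left M i)
    simpa using this
  rw [Finset.sum_congr rfl h1]
  have h2 : ∑ i ∈ range (m+1), (i+M).choose M = ∑ j ∈ Icc M (m+M), j.choose M := by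
    refine Finset.sum_nbij' (fun i => i + M) (fun j => j - M) ?_ ?_ ?_ ?_ ?_
    · intro a ha; simp only [mem_range] at ha; simp only [mem_Icc]; omega
    · intro a ha; simp only [mem_Icc] at ha; simp only [mem_range]; omega
    · intro a ha; simp only [mem_range] at ha; omega
    · intro a ha; simp only [mem_Icc] at ha; omega
    · intro a ha; rfl
  rw [h2, Nat.sum_Icc_choose]
  have := Nat.choose_symm (show m ≤ m + M + 1 by omega)
  simpa [show m + M + 1 - m = M + 1 by omega] using this

lemma hasSum_negBinom (M : ℕ) {x : ℝ} (h0 : 0 ≤ x) (h1 : x < 1) :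
    HasSum (fun m : ℕ => ((m+M).choose m : ℝ) * x^m) (((1-x)^(M+1))⁻¹) := by
  induction M with
  | zero => simpa using hasSum_geometric_of_lt_one h0 h1
  | succ M ih =>
    set f : ℕ → ℝ := fun m => ((m+M).choose m : ℝ) * x^m with hf
    set g : ℕ → ℝ := fun m => x^m with hg
    have hfn : Summable fun m => ‖f m‖ := by
      refine ih.summable.congr fun m => ?_
      rw [Real.norm_eq_abs, abs_of_nonneg (by positivity)]
    have hgn : Summable fun m => ‖g m‖ := by
      refine (hasSum_geometric_of_lt_one h0 h1).summable.congr fun m => ?_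
      rw [Real.norm_eq_abs, abs_of_nonneg (by positivity)]
    have hsum : Summable fun n => ∑ kl ∈ antidiagonal n, f kl.1 * g kl.2 :=
      (summable_norm_sum_mul_antidiagonal_of_summable_norm hfn hgn).of_norm
    have htsum : ∑' n, ∑ kl ∈ antidiagonal n, f kl.1 * g kl.2
        = (((1-x)^(M+1))⁻¹) * (1-x)⁻¹ := by
      rw [← tsum_mul_tsum_eq_tsum_sum_antidiagonal_of_summable_norm hfn hgn,
        ih.tsum_eq, (hasSum_geometric_of_lt_one h0 h1).tsum_eq]
    have hkey : ∀ n : ℕ, ∑ kl ∈ antidiagonal n, f kl.1 * g kl.2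
        = ((n+(M+1)).choose n : ℝ) * x^n := by
      intro n
      rw [Finset.Nat.sum_antidiagonal_eq_sum_range_succ_mk]
      have : ∀ k ∈ range (n+1), f k * g (n - k) = ((k+M).choose k : ℝ) * x^n := by
        intro k hk
        simp only [mem_range] at hk
        simp only [hf, hg]
        rw [mul_assoc, ← pow_add]
        congr 2
        omega
      have h5 : ∑ k ∈ range (n+1), (k+M).choose k = (n+(M+1)).choose n := by
        rw [sum_range_choose_add M n, Nat.add_assoc]
      rw [Finset.sum_congr rfl this, ← Finset.sum_mul, ← Nat.cast_sum, h5]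
    have hsum2 : Summable fun n : ℕ => ((n+(M+1)).choose n : ℝ) * x^n :=
      hsum.congr hkey
    refine hsum2.hasSum_iff.mpr ?_
    rw [← tsum_congr hkey, htsum]
    rw [← mul_inv, ← pow_succ]

lemma hasSum_marked (M : ℕ) {x : ℝ} (h0 : 0 ≤ x) (h1 : x < 1) :
    HasSum (fun m : ℕ => ((m+M).choose (M+1) : ℝ) * x^m) (x * ((1-x)^(M+2))⁻¹) := by
  have h := (hasSum_negBinom (M+1) h0 h1).mul_left x
  have h2 : HasSum (fun n : ℕ => ((n+1+M).choose (M+1):ℝ) * x^(n+1)) (x * ((1-x)^(M+1+1))⁻¹) := by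
    refine h.congr_fun fun n => ?_
    have hc : (n+(M+1)).choose n = (n+1+M).choose (M+1) := by
      have := Nat.choose_symm (show n ≤ n + (M+1) by omega)
      rw [show n + (M+1) - n = M + 1 by omega] at this
      rw [← this]; congr 1; omega
    rw [← hc, pow_succ]; ring
  have h3 := (hasSum_nat_add_iff (f := fun m : ℕ => ((m+M).choose (M+1) : ℝ) * x^m) 1).mp h2
  simpa [Nat.choose_eq_zero_of_lt (show M < M + 1 by omega)] using h3

namespace AlphaWAux

noncomputable def W (A : ℕ → ℕ → ℝ≥0∞) (n : ℕ →₀ ℕ) : ℝ≥0∞ :=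
  ∏ u ∈ n.support, A u (n u)

noncomputable def Phi (A : ℕ → ℕ → ℝ≥0∞) (U : Set ℕ) : ℝ≥0∞ :=
  ∑' n : {n : ℕ →₀ ℕ // ↑n.support ⊆ U}, W A n.1

lemma W_factor (A : ℕ → ℕ → ℝ≥0∞) (hA : ∀ u, A u 0 = 1) (t : ℕ) (n : ℕ →₀ ℕ) :
    W A n = A t (n t) * ∏ u ∈ n.support.erase t, A u (n u) := by
  by_cases ht : t ∈ n.support
  · exact (Finset.mul_prod_erase _ _ ht).symm
  · have h0 : n t = 0 := Finsupp.notMem_support_iff.mp ht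
    rw [W, h0, hA, one_mul, Finset.erase_eq_of_notMem ht]

lemma erase_add_single_eq {t : ℕ} {n' : ℕ →₀ ℕ} (h : n' t = 0) (m : ℕ) :
    Finsupp.erase t (n' + Finsupp.single t m) = n' := by
  rw [Finsupp.erase_add, Finsupp.erase_single, add_zero,
    Finsupp.erase_of_notMem_support (by simpa [Finsupp.mem_support_iff] using h)]

noncomputable def peelEquiv (t : ℕ) (U : Set ℕ) (ht : t ∈ U) :
    {n : ℕ →₀ ℕ // ↑n.support ⊆ U} ≃ ℕ × {n : ℕ →₀ ℕ // ↑n.support ⊆ U \ {t}} where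
  toFun n := (n.1 t, ⟨n.1.erase t, by
    rw [Finsupp.support_erase, Finset.coe_erase]
    exact Set.diff_subset_diff_left n.2⟩)
  invFun p := ⟨p.2.1 + Finsupp.single t p.1, by
    refine subset_trans (Finset.coe_subset.mpr (Finsupp.support_add)) ?_
    rw [Finset.coe_union]
    refine Set.union_subset (subset_trans p.2.2 Set.diff_subset) ?_
    refine subset_trans (Finset.coe_subset.mpr Finsupp.support_single_subset) ?_
    simpa using ht⟩
  left_inv n := by
    apply Subtype.ext
    exact Finsupp.erase_add_single t n.1
  right_inv p := by
    have hp : p.2.1 t = 0 := by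
      by_contra h
      exact (p.2.2 (Finsupp.mem_support_iff.mpr h)).2 rfl
    refine Prod.ext ?_ (Subtype.ext ?_)
    · show (p.2.1 + Finsupp.single t p.1) t = p.1
      rw [Finsupp.add_apply, hp, Finsupp.single_eq_same, zero_add]
    · show Finsupp.erase t (p.2.1 + Finsupp.single t p.1) = p.2.1
      exact erase_add_single_eq hp p.1

lemma peel (A : ℕ → ℕ → ℝ≥0∞) (t : ℕ) (U : Set ℕ) (ht : t ∈ U) (c : ℕ → ℝ≥0∞) :
    ∑' n : {n : ℕ →₀ ℕ // ↑n.support ⊆ U},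
      c (n.1 t) * ∏ u ∈ n.1.support.erase t, A u (n.1 u)
    = (∑' m, c m) * Phi A (U \ {t}) := by
  rw [← (peelEquiv t U ht).symm.tsum_eq]
  have key : ∀ p : ℕ × {n : ℕ →₀ ℕ // ↑n.support ⊆ U \ {t}},
      c (((peelEquiv t U ht).symm p).1 t) *
        ∏ u ∈ ((peelEquiv t U ht).symm p).1.support.erase t,
          A u (((peelEquiv t U ht).symm p).1 u)
      = c p.1 * W A p.2.1 := by
    rintro ⟨m, n'⟩
    have hp : n'.1 t = 0 := by
      by_contra h
      exact (n'.2 (Finsupp.mem_support_iff.mpr h)).2 rfl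
    have hval : ((peelEquiv t U ht).symm (m, n')).1 = n'.1 + Finsupp.single t m := rfl
    have herase : (n'.1 + Finsupp.single t m).support.erase t = n'.1.support := by
      rw [← Finsupp.support_erase, erase_add_single_eq hp]
    have happ : (n'.1 + Finsupp.single t m) t = m := by
      rw [Finsupp.add_apply, hp, Finsupp.single_eq_same, zero_add]
    rw [hval, happ, herase]
    congr 1
    refine Finset.prod_congr rfl fun u hu => ?_
    have hut : u ≠ t := fun h => by
      subst h; exact Finsupp.mem_support_iff.mp hu hp
    rw [Finsupp.add_apply, Finsupp.single_eq_of_ne hut, add_zero]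
  rw [tsum_congr key]
  calc ∑' (b : ℕ × {n : ℕ →₀ ℕ // ↑n.support ⊆ U \ {t}}), c b.1 * W A ↑b.2
      = ∑' (m : ℕ) (n' : {n : ℕ →₀ ℕ // ↑n.support ⊆ U \ {t}}), c m * W A ↑n' :=
        ENNReal.tsum_prod (f := fun (m : ℕ) (n' : {n : ℕ →₀ ℕ // ↑n.support ⊆ U \ {t}}) => c m * W A ↑n')
    _ = ∑' (m : ℕ), c m * Phi A (U \ {t}) := by
        refine tsum_congr fun m => ?_
        rw [ENNReal.tsum_mul_left]
        rfl
    _ = (∑' m, c m) * Phi A (U \ {t}) := ENNReal.tsum_mul_right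

lemma Phi_empty (A : ℕ → ℕ → ℝ≥0∞) : Phi A (∅ : Set ℕ) = 1 := by
  have huniq : ∀ n : {n : ℕ →₀ ℕ // ↑n.support ⊆ (∅ : Set ℕ)}, n.1 = 0 := by
    rintro ⟨n, hn⟩
    have h1 : (↑n.support : Set ℕ) = ∅ := Set.subset_empty_iff.mp hn
    exact Finsupp.support_eq_empty.mp (Finset.coe_eq_empty.mp h1)
  rw [Phi, tsum_eq_single (⟨0, by simp⟩ : {n : ℕ →₀ ℕ // ↑n.support ⊆ (∅ : Set ℕ)})]
  · simp [W]
  · intro b hb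
    exact absurd (Subtype.ext ((huniq b))) hb

lemma Phi_insert (A : ℕ → ℕ → ℝ≥0∞) (hA : ∀ u, A u 0 = 1) (t : ℕ) (U : Set ℕ)
    (htU : t ∉ U) : Phi A (insert t U) = (∑' m, A t m) * Phi A U := by
  have h := peel A t (insert t U) (Set.mem_insert t U) (A t)
  rw [Set.insert_diff_self_of_notMem htU] at h
  rw [← h, Phi]
  exact tsum_congr fun n => W_factor A hA t n.1

lemma Phi_finset (A : ℕ → ℕ → ℝ≥0∞) (hA : ∀ u, A u 0 = 1) (F : Finset ℕ) :
    Phi A ↑F = ∏ u ∈ F, ∑' m, A u m := by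
  induction F using Finset.induction_on with
  | empty => simpa using Phi_empty A
  | @insert a F ha ih =>
      rw [Finset.coe_insert, Phi_insert A hA a ↑F (by simpa using ha), ih,
        Finset.prod_insert ha]

lemma Phi_eq_indicator (A : ℕ → ℕ → ℝ≥0∞) (U : Set ℕ) :
    Phi A U = ∑' n : ℕ →₀ ℕ,
      Set.indicator {n : ℕ →₀ ℕ | (n.support : Set ℕ) ⊆ U} (W A) n :=
  tsum_subtype {n : ℕ →₀ ℕ | (n.support : Set ℕ) ⊆ U} (W A)

lemma Phi_mono (A : ℕ → ℕ → ℝ≥0∞) {U V : Set ℕ} (h : U ⊆ V) : Phi A U ≤ Phi A V := by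
  rw [Phi_eq_indicator, Phi_eq_indicator]
  refine ENNReal.tsum_le_tsum fun n => ?_
  have hsub : {n : ℕ →₀ ℕ | (n.support : Set ℕ) ⊆ U}
      ⊆ {n : ℕ →₀ ℕ | (n.support : Set ℕ) ⊆ V} := fun n hn => subset_trans hn h
  exact Set.indicator_le_indicator_of_subset hsub (fun _ => zero_le) n

lemma Phi_eq_iSup (A : ℕ → ℕ → ℝ≥0∞) (hA : ∀ u, A u 0 = 1) (U : Set ℕ) :
    Phi A U = ⨆ (F : Finset ℕ) (_ : ↑F ⊆ U), ∏ u ∈ F, ∑' m, A u m := by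
  refine le_antisymm ?_ ?_
  · rw [Phi_eq_indicator, ENNReal.tsum_eq_iSup_sum]
    refine iSup_le fun s => ?_
    classical
    set F : Finset ℕ := s.sup (fun n => if ↑n.support ⊆ U then n.support else ∅) with hF
    have hFU : ↑F ⊆ U := by
      intro u hu
      rw [hF] at hu
      simp only [Finset.mem_coe] at hu
      obtain ⟨n, _, hn⟩ := Finset.mem_sup.mp hu
      by_cases hns : ↑n.support ⊆ U
      · rw [if_pos hns] at hn; exact hns hn
      · rw [if_neg hns] at hn; exact absurd hn (Finset.notMem_empty u)
    have hle : ∀ n ∈ s, Set.indicator {n : ℕ →₀ ℕ | (n.support : Set ℕ) ⊆ U} (W A) n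
        ≤ Set.indicator {n : ℕ →₀ ℕ | (n.support : Set ℕ) ⊆ (↑F : Set ℕ)} (W A) n := by
      intro n hn
      by_cases hns : (n.support : Set ℕ) ⊆ U
      · have h1 : n ∈ {n : ℕ →₀ ℕ | (n.support : Set ℕ) ⊆ U} := hns
        have h2 : n ∈ {n : ℕ →₀ ℕ | (n.support : Set ℕ) ⊆ (↑F : Set ℕ)} := by
          have : n.support ⊆ F := by
            have h3 : (if (n.support : Set ℕ) ⊆ U then n.support else ∅) ≤ F :=
              Finset.le_sup (f := fun n : ℕ →₀ ℕ =>
                if (n.support : Set ℕ) ⊆ U then n.support else ∅) hn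
            rw [if_pos hns] at h3
            exact h3
          exact fun u hu => Finset.mem_coe.mpr (this (Finset.mem_coe.mp hu))
        rw [Set.indicator_of_mem h1, Set.indicator_of_mem h2]
      · have hmem : n ∉ {n : ℕ →₀ ℕ | (n.support : Set ℕ) ⊆ U} := hns
        rw [Set.indicator_of_notMem hmem]
        exact zero_le
    calc ∑ n ∈ s, Set.indicator {n : ℕ →₀ ℕ | (n.support : Set ℕ) ⊆ U} (W A) n
        ≤ ∑ n ∈ s, Set.indicator {n : ℕ →₀ ℕ | (n.support : Set ℕ) ⊆ (↑F : Set ℕ)} (W A) n :=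
          Finset.sum_le_sum hle
      _ ≤ ∑' n : ℕ →₀ ℕ, Set.indicator {n : ℕ →₀ ℕ | (n.support : Set ℕ) ⊆ (↑F : Set ℕ)} (W A) n :=
          ENNReal.sum_le_tsum s
      _ = Phi A ↑F := (Phi_eq_indicator A ↑F).symm
      _ = ∏ u ∈ F, ∑' m, A u m := Phi_finset A hA F
      _ ≤ ⨆ (F : Finset ℕ) (_ : ↑F ⊆ U), ∏ u ∈ F, ∑' m, A u m := by
          exact le_iSup₂ (f := fun (F : Finset ℕ) (_ : ↑F ⊆ U) => ∏ u ∈ F, ∑' m, A u m) F hFU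
  · refine iSup₂_le fun F hF => ?_
    rw [← Phi_finset A hA F]
    exact Phi_mono A hF

end AlphaWAux

lemma hasProd_of_one_le_of_bddAbove {f : ℕ → ℝ} (h1 : ∀ i, 1 ≤ f i)
    (hb : BddAbove (Set.range fun A : Finset ℕ => ∏ u ∈ A, f u)) :
    HasProd f (⨆ A : Finset ℕ, ∏ u ∈ A, f u) := by
  have hmono : Monotone (fun A : Finset ℕ => ∏ u ∈ A, f u) := by
    intro A B hAB
    have h2 : (1:ℝ) ≤ ∏ u ∈ B \ A, f u := by
      have := Finset.prod_le_prod (s := B \ A) (f := fun _ => (1:ℝ)) (g := f)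
        (fun i _ => zero_le_one) (fun i _ => h1 i)
      simpa using this
    have h3 : (0:ℝ) ≤ ∏ u ∈ A, f u :=
      Finset.prod_nonneg fun i _ => le_trans zero_le_one (h1 i)
    calc ∏ u ∈ A, f u ≤ (∏ u ∈ B \ A, f u) * ∏ u ∈ A, f u :=
          le_mul_of_one_le_left h3 h2
      _ = ∏ u ∈ B, f u := Finset.prod_sdiff hAB
  exact tendsto_atTop_ciSup hmono hb

lemma one_le_gfactor {q : ℝ} (hq0 : 0 < q) (hq1 : q < 1) (K : ℕ) (v : ℕ) :
    1 ≤ ((1 - q ^ (v+1)) ^ (K * (v+1)))⁻¹ := by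
  have hx1 : q ^ (v+1) < 1 := pow_lt_one₀ hq0.le hq1 (Nat.succ_ne_zero v)
  have hx0 : 0 < q ^ (v+1) := pow_pos hq0 _
  have h1 : 0 < 1 - q ^ (v+1) := by linarith
  refine one_le_inv_iff₀.mpr ⟨pow_pos h1 _, pow_le_one₀ h1.le (by linarith)⟩

lemma summable_aux {q : ℝ} (hq0 : 0 < q) (hq1 : q < 1) (c : ℝ) :
    Summable (fun v : ℕ => c * ((v+1) * q ^ (v+1))) := by
  have h : Summable (fun n : ℕ => (n:ℝ) * q ^ n) := by
    simpa using summable_pow_mul_geometric_of_norm_lt_one 1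
      (r := q) (by rw [Real.norm_eq_abs, abs_of_nonneg hq0.le]; exact hq1)
  have h2 : Summable (fun v : ℕ => (((v+1:ℕ)):ℝ) * q ^ (v+1)) :=
    h.comp_injective Nat.succ_injective
  refine ((h2.congr ?_).mul_left c)
  intro v; push_cast; ring

lemma gfactor_le {q : ℝ} (hq0 : 0 < q) (hq1 : q < 1) (K : ℕ) (v : ℕ) :
    ((1 - q ^ (v+1)) ^ (K * (v+1)))⁻¹
      ≤ Real.exp ((K/(1-q)) * ((v+1) * q ^ (v+1))) := by
  have hx1 : q ^ (v+1) < 1 := pow_lt_one₀ hq0.le hq1 (Nat.succ_ne_zero v)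
  have hx0 : 0 < q ^ (v+1) := pow_pos hq0 _
  have h1 : 0 < 1 - q ^ (v+1) := by linarith
  have hq' : 0 < 1 - q := by linarith
  have hxq : q ^ (v+1) ≤ q := by
    calc q ^ (v+1) ≤ q ^ 1 := pow_le_pow_of_le_one hq0.le hq1.le (by omega)
    _ = q := pow_one q
  have key : (1 - q ^ (v+1))⁻¹ ≤ Real.exp (q ^ (v+1) / (1-q)) := by
    have hx2 : q^(v+1) ≤ q^(v+1)/(1-q) * (1-q^(v+1)) := by
      have h4 : 0 ≤ q^(v+1)/(1-q) := by positivity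
      have h5 := mul_le_mul_of_nonneg_left
        (show 1-q ≤ 1-q^(v+1) by linarith) h4
      calc q^(v+1) = q^(v+1)/(1-q) * (1-q) := by field_simp
      _ ≤ q^(v+1)/(1-q) * (1-q^(v+1)) := h5
    have hmul : 1 ≤ (1 + q^(v+1)/(1-q)) * (1 - q^(v+1)) := by nlinarith
    have h2 : (1 - q ^ (v+1))⁻¹ ≤ 1 + q ^ (v+1) / (1-q) := by
      rw [inv_eq_one_div, div_le_iff₀ h1]; linarith
    calc (1 - q ^ (v+1))⁻¹ ≤ 1 + q ^ (v+1) / (1-q) := h2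
      _ ≤ Real.exp (q ^ (v+1) / (1-q)) := by
          have := Real.add_one_le_exp (q ^ (v+1) / (1-q))
          linarith
  calc ((1 - q ^ (v+1)) ^ (K * (v+1)))⁻¹ = ((1 - q ^ (v+1))⁻¹) ^ (K * (v+1)) := by
        rw [inv_pow]
    _ ≤ (Real.exp (q ^ (v+1) / (1-q))) ^ (K * (v+1)) := by
        apply pow_le_pow_left₀ (by positivity) key
    _ = Real.exp ((K * (v+1) : ℕ) * (q ^ (v+1) / (1-q))) := by
        rw [← Real.exp_nat_mul]
    _ = Real.exp ((K/(1-q)) * ((v+1) * q ^ (v+1))) := by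
        congr 1; push_cast; field_simp

lemma bddAbove_gprod {q : ℝ} (hq0 : 0 < q) (hq1 : q < 1) (K : ℕ) :
    BddAbove (Set.range fun A : Finset ℕ =>
      ∏ v ∈ A, ((1 - q ^ (v+1)) ^ (K * (v+1)))⁻¹) := by
  have hsummable := summable_aux hq0 hq1 ((K:ℝ)/(1-q))
  refine ⟨Real.exp (∑' v : ℕ, (K/(1-q)) * ((v+1) * q ^ (v+1))), ?_⟩
  rintro x ⟨A, rfl⟩
  calc ∏ v ∈ A, ((1 - q ^ (v+1)) ^ (K * (v+1)))⁻¹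
      ≤ ∏ v ∈ A, Real.exp ((K/(1-q)) * ((v+1) * q ^ (v+1))) := by
        refine Finset.prod_le_prod (fun v _ => ?_) (fun v _ => gfactor_le hq0 hq1 K v)
        have := one_le_gfactor hq0 hq1 K v; linarith
    _ = Real.exp (∑ v ∈ A, (K/(1-q)) * ((v+1) * q ^ (v+1))) := (Real.exp_sum A _).symm
    _ ≤ Real.exp (∑' v : ℕ, (K/(1-q)) * ((v+1) * q ^ (v+1))) := by
        apply Real.exp_le_exp.mpr
        refine Summable.sum_le_tsum A (fun v _ => ?_) hsummable
        have hq' : (0:ℝ) < 1 - q := by linarith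
        have h6 : (0:ℝ) ≤ (K:ℝ)/(1-q) := div_nonneg (Nat.cast_nonneg K) hq'.le
        positivity

lemma hasSum_S {q : ℝ} (hq0 : 0 < q) (hq1 : q < 1) (s : ℕ) :
    HasSum (fun m : ℕ => ((m + 1 : ℝ)) * q ^ (s + 1 + m) / (1 - q ^ (s + 1 + m)))
      (∑' m : ℕ, ((m + 1 : ℝ)) * q ^ (s + 1 + m) / (1 - q ^ (s + 1 + m))) := by
  have hq' : 0 < 1 - q := by linarith
  have hsum : Summable (fun m : ℕ => ((m + 1 : ℝ)) * q ^ (s + 1 + m) / (1 - q ^ (s + 1 + m))) := by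
    have hbig : Summable (fun m : ℕ => (1/(1-q) * q ^ s) * ((m+1) * q ^ (m+1))) :=
      summable_aux hq0 hq1 _
    refine Summable.of_nonneg_of_le (fun m => ?_) (fun m => ?_) hbig
    · have h1 : q ^ (s+1+m) < 1 := pow_lt_one₀ hq0.le hq1 (by omega)
      have h2 : 0 < q ^ (s+1+m) := pow_pos hq0 _
      exact div_nonneg (by positivity) (by linarith)
    · have h1 : q ^ (s+1+m) < 1 := pow_lt_one₀ hq0.le hq1 (by omega)
      have h3 : 1 - q ≤ 1 - q ^ (s+1+m) := by
        have : q ^ (s+1+m) ≤ q := by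
          calc q ^ (s+1+m) ≤ q ^ 1 := pow_le_pow_of_le_one hq0.le hq1.le (by omega)
          _ = q := pow_one q
        linarith
      have h4 : ((m + 1 : ℝ)) * q ^ (s + 1 + m) / (1 - q ^ (s + 1 + m))
          ≤ ((m + 1 : ℝ)) * q ^ (s + 1 + m) / (1 - q) := by
        apply div_le_div_of_nonneg_left (by positivity) hq' h3
      refine h4.trans (le_of_eq ?_)
      rw [show s+1+m = s + (m+1) by omega, pow_add]
      field_simp
  exact hsum.hasSum

lemma alphaW_eq (K s : ℕ) (hK : 1 ≤ K) (n : ℕ →₀ ℕ) (hn0 : n 0 = 0) :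
    alphaW K s n = ∑ t ∈ n.support.filter (fun t => s+1 ≤ t),
      (t - s) * (n t + t*K - 1).choose (t*K) *
        ∏ u ∈ n.support.erase t, (n u + u*K - 1).choose (n u) := by
  classical
  set c : ℕ → ℕ := fun u => (n u + u*K - 1).choose (n u) with hc
  have hc1 : ∀ u, u ∉ n.support → c u = 1 := by
    intro u hu
    have h0 : n u = 0 := Finsupp.notMem_support_iff.mp hu
    simp [hc, h0]
  have hinner : ∀ t : ℕ, (∏ᶠ u ∈ {u : ℕ | 1 ≤ u ∧ u ≠ t}, c u)
      = ∏ u ∈ n.support.erase t, c u := by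
    intro t
    have hsupp : Function.mulSupport c ⊆ ↑n.support := by
      intro u hu
      by_contra h
      exact hu (hc1 u (by simpa using h))
    have hfin : ({u : ℕ | 1 ≤ u ∧ u ≠ t} ∩ Function.mulSupport c).Finite :=
      Set.Finite.subset (n.support.finite_toSet)
        (subset_trans (Set.inter_subset_right) hsupp)
    rw [finprod_mem_eq_prod c hfin]
    apply Finset.prod_subset
    · intro x hx
      rw [Set.Finite.mem_toFinset] at hx
      obtain ⟨⟨hx1, hxt⟩, hxm⟩ := hx
      exact Finset.mem_erase.mpr ⟨hxt, by exact_mod_cast hsupp hxm⟩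
    · intro x hx hx2
      rw [Finset.mem_erase] at hx
      by_contra h
      apply hx2
      rw [Set.Finite.mem_toFinset]
      refine ⟨⟨?_, hx.1⟩, h⟩
      rcases Nat.eq_zero_or_pos x with h0 | h1
      · exfalso
        subst h0
        exact (Finsupp.mem_support_iff.mp hx.2) hn0
      · exact h1
  set body : ℕ → ℕ := fun t =>
    (t - s) * (n t + t*K - 1).choose (t*K) * ∏ u ∈ n.support.erase t, c u with hbody
  have h1 : alphaW K s n = ∑ᶠ t ∈ {t : ℕ | s + 1 ≤ t}, body t := by
    rw [alphaW]
    exact finsum_mem_congr rfl (fun t _ => by rw [hinner t])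
  rw [h1]
  have hbsupp : {t : ℕ | s + 1 ≤ t} ∩ Function.support body ⊆ ↑n.support := by
    intro t ⟨hts, htb⟩
    simp only [Set.mem_setOf_eq] at hts
    by_contra h
    apply htb
    have h0 : n t = 0 := Finsupp.notMem_support_iff.mp (by simpa using h)
    have htK : 1 ≤ t * K := by
      have : 1 ≤ t := by omega
      exact Nat.one_le_iff_ne_zero.mpr (by positivity)
    have : (n t + t*K - 1).choose (t*K) = 0 := by
      apply Nat.choose_eq_zero_of_lt
      omega
    simp [hbody, this]
  have hfin2 : ({t : ℕ | s + 1 ≤ t} ∩ Function.support body).Finite :=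
    Set.Finite.subset (n.support.finite_toSet) hbsupp
  rw [finsum_mem_eq_sum body hfin2]
  apply Finset.sum_subset
  · intro t ht
    rw [Set.Finite.mem_toFinset] at ht
    refine Finset.mem_filter.mpr ⟨by exact_mod_cast hbsupp ht, ht.1⟩
  · intro t ht ht2
    rw [Finset.mem_filter] at ht
    by_contra h
    apply ht2
    rw [Set.Finite.mem_toFinset]
    exact ⟨ht.2, h⟩

noncomputable def Aw (K : ℕ) (q : ℝ) : ℕ → ℕ → ℝ≥0∞ := fun u m =>
  ENNReal.ofReal (((m + u*K - 1).choose m : ℝ) * q ^ (u*m))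

noncomputable def Cw (K : ℕ) (q : ℝ) (t : ℕ) : ℕ → ℝ≥0∞ := fun m =>
  ENNReal.ofReal (((m + t*K - 1).choose (t*K) : ℝ) * q ^ (t*m))

lemma Aw_zero (K : ℕ) (q : ℝ) (u : ℕ) : Aw K q u 0 = 1 := by
  simp [Aw]

lemma tsum_Aw {q : ℝ} (hq0 : 0 < q) (hq1 : q < 1) {K : ℕ} (hK : 1 ≤ K)
    (u : ℕ) (hu : 1 ≤ u) :
    ∑' m, Aw K q u m = ENNReal.ofReal (((1 - q^u)^(u*K))⁻¹) := by
  have huK : 1 ≤ u*K := Nat.one_le_iff_ne_zero.mpr (by positivity)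
  have hM : u*K - 1 + 1 = u*K := by omega
  have hx0 : (0:ℝ) ≤ q^u := by positivity
  have hx1 : q^u < 1 := pow_lt_one₀ hq0.le hq1 (by omega)
  have h := hasSum_negBinom (u*K-1) hx0 hx1
  rw [hM] at h
  have hfun : (fun m : ℕ => ((m + (u*K-1)).choose m : ℝ) * (q^u)^m)
      = fun m : ℕ => ((m + u*K - 1).choose m : ℝ) * q ^ (u*m) := by
    funext m
    rw [← pow_mul, show m + (u*K-1) = m + u*K - 1 by omega]
  rw [hfun] at h
  simp only [Aw]
  rw [← ENNReal.ofReal_tsum_of_nonneg (fun m => by positivity) h.summable, h.tsum_eq]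

lemma tsum_Cw {q : ℝ} (hq0 : 0 < q) (hq1 : q < 1) {K : ℕ} (hK : 1 ≤ K)
    (t : ℕ) (ht : 1 ≤ t) :
    ∑' m, Cw K q t m = ENNReal.ofReal (q^t * ((1 - q^t)^(t*K+1))⁻¹) := by
  have htK : 1 ≤ t*K := Nat.one_le_iff_ne_zero.mpr (by positivity)
  have hx0 : (0:ℝ) ≤ q^t := by positivity
  have hx1 : q^t < 1 := pow_lt_one₀ hq0.le hq1 (by omega)
  have h := hasSum_marked (t*K-1) hx0 hx1
  have hfun : (fun m : ℕ => ((m + (t*K-1)).choose ((t*K-1)+1) : ℝ) * (q^t)^m)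
      = fun m : ℕ => ((m + t*K - 1).choose (t*K) : ℝ) * q ^ (t*m) := by
    funext m
    rw [← pow_mul, show m + (t*K-1) = m + t*K - 1 by omega, show t*K-1+1 = t*K by omega]
  rw [hfun] at h
  rw [show t*K-1+2 = t*K+1 by omega] at h
  simp only [Cw]
  rw [← ENNReal.ofReal_tsum_of_nonneg (fun m => by positivity) h.summable, h.tsum_eq]

-- === new material ===

lemma ENNReal_cancel {a b c : ℝ≥0∞} (h0 : a ≠ 0) (ht : a ≠ ⊤) (h : a * b = a * c) :
    b = c := by
  have h2 := congrArg (fun x => a⁻¹ * x) h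
  simpa [← mul_assoc, ENNReal.inv_mul_cancel h0 ht] using h2

def shiftEquiv (s : ℕ) : ℕ ≃ {t : ℕ // s + 1 ≤ t} :=
  ⟨fun m => ⟨s + 1 + m, by omega⟩, fun t => t.1 - (s + 1),
    fun m => by simp, fun t => by
      apply Subtype.ext
      have := t.2
      simp only
      omega⟩

lemma shiftEquiv_apply (s m : ℕ) : ((shiftEquiv s) m).1 = s + 1 + m := rfl

lemma weight_eq (K s : ℕ) (hK : 1 ≤ K) {q : ℝ} (hq0 : 0 < q)
    (n : ℕ →₀ ℕ) (hn0 : n 0 = 0) :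
    ENNReal.ofReal ((alphaW K s n : ℝ) * q ^ (∑ j ∈ n.support, j * n j))
      = ∑ t ∈ n.support.filter (fun t => s+1 ≤ t),
          ((t - s : ℕ) : ℝ≥0∞) * Cw K q t (n t) *
            ∏ u ∈ n.support.erase t, Aw K q u (n u) := by
  rw [ENNReal.ofReal_mul (by positivity), ENNReal.ofReal_natCast,
    alphaW_eq K s hK n hn0, Nat.cast_sum, Finset.sum_mul]
  refine Finset.sum_congr rfl fun t ht => ?_
  rw [Finset.mem_filter] at ht
  have hCw : Cw K q t (n t)
      = ((n t + t*K - 1).choose (t*K) : ℝ≥0∞) * (ENNReal.ofReal q) ^ (t * n t) := by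
    simp only [Cw]
    rw [ENNReal.ofReal_mul (by positivity), ENNReal.ofReal_pow hq0.le,
      ENNReal.ofReal_natCast]
  have hAw : ∀ u m, Aw K q u m
      = ((m + u*K - 1).choose m : ℝ≥0∞) * (ENNReal.ofReal q) ^ (u * m) := by
    intro u m; simp only [Aw]
    rw [ENNReal.ofReal_mul (by positivity), ENNReal.ofReal_pow hq0.le,
      ENNReal.ofReal_natCast]
  have hq_split : ENNReal.ofReal (q ^ (∑ j ∈ n.support, j * n j))
      = (ENNReal.ofReal q) ^ (t * n t)
          * ∏ u ∈ n.support.erase t, (ENNReal.ofReal q) ^ (u * n u) := by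
    rw [ENNReal.ofReal_pow hq0.le, ← Finset.prod_pow_eq_pow_sum,
      ← Finset.mul_prod_erase _ _ ht.1]
  rw [hq_split, hCw, Nat.cast_mul, Nat.cast_mul, Nat.cast_prod]
  simp only [hAw]
  rw [Finset.prod_mul_distrib]
  ring

lemma Phi_pos_eq {q : ℝ} (hq0 : 0 < q) (hq1 : q < 1) {K : ℕ} (hK : 1 ≤ K) :
    AlphaWAux.Phi (Aw K q) {u : ℕ | 1 ≤ u}
      = ENNReal.ofReal (⨆ A : Finset ℕ, ∏ v ∈ A, ((1 - q ^ (v+1)) ^ (K * (v+1)))⁻¹) := by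
  classical
  set g : ℕ → ℝ := fun v => ((1 - q ^ (v+1)) ^ (K * (v+1)))⁻¹ with hg
  have hb := bddAbove_gprod hq0 hq1 K
  have hg1 : ∀ v, 1 ≤ g v := one_le_gfactor hq0 hq1 K
  have hg0 : ∀ v, 0 ≤ g v := fun v => le_trans zero_le_one (hg1 v)
  have hfac : ∀ u : ℕ, 1 ≤ u → ∑' m, Aw K q u m = ENNReal.ofReal (g (u-1)) := by
    intro u hu
    rw [tsum_Aw hq0 hq1 hK u hu]
    congr 1
    simp only [hg]
    rw [show u - 1 + 1 = u by omega, Nat.mul_comm]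
  rw [AlphaWAux.Phi_eq_iSup (Aw K q) (Aw_zero K q)]
  apply le_antisymm
  · refine iSup₂_le fun F hF => ?_
    have hmem : ∀ u ∈ F, 1 ≤ u := fun u hu => hF (Finset.mem_coe.mpr hu)
    have key1 : ∏ u ∈ F, (∑' m, Aw K q u m)
        = ENNReal.ofReal (∏ v ∈ F.image (· - 1), g v) := by
      rw [Finset.prod_image (by
        intro a ha b hb hab
        have := hmem a ha; have := hmem b hb
        simp only at hab; omega)]
      rw [ENNReal.ofReal_prod_of_nonneg (fun u _ => hg0 _)]
      exact Finset.prod_congr rfl fun u hu => hfac u (hmem u hu)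
    rw [key1]
    exact ENNReal.ofReal_le_ofReal (le_ciSup hb (F.image (· - 1)))
  · set B : ℝ≥0∞ := ⨆ (F : Finset ℕ) (_ : ↑F ⊆ {u : ℕ | 1 ≤ u}), ∏ u ∈ F, ∑' m, Aw K q u m
      with hB
    have hkey2 : ∀ E : Finset ℕ, ENNReal.ofReal (∏ v ∈ E, g v) ≤ B := by
      intro E
      have hF : ↑(E.image (· + 1)) ⊆ {u : ℕ | 1 ≤ u} := by
        intro u hu
        simp only [Finset.coe_image, Set.mem_image, Finset.mem_coe] at hu
        obtain ⟨v, _, rfl⟩ := hu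
        simp
      have key2 : ∏ u ∈ E.image (· + 1), (∑' m, Aw K q u m)
          = ENNReal.ofReal (∏ v ∈ E, g v) := by
        rw [Finset.prod_image (by intro a _ b _ h; simpa using h)]
        rw [ENNReal.ofReal_prod_of_nonneg (fun u _ => hg0 _)]
        refine Finset.prod_congr rfl fun v _ => ?_
        rw [hfac (v+1) (by omega)]
        congr 1
      calc ENNReal.ofReal (∏ v ∈ E, g v) = ∏ u ∈ E.image (· + 1), (∑' m, Aw K q u m) :=
            key2.symm
        _ ≤ B := by
            rw [hB]
            exact le_iSup₂ (f := fun (F : Finset ℕ) (_ : ↑F ⊆ {u : ℕ | 1 ≤ u}) =>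
              ∏ u ∈ F, ∑' m, Aw K q u m) (E.image (· + 1)) hF
    have hBle : B ≤ ENNReal.ofReal (⨆ A : Finset ℕ, ∏ v ∈ A, g v) := by
      rw [hB]
      refine iSup₂_le fun F hF => ?_
      have hmem : ∀ u ∈ F, 1 ≤ u := fun u hu => hF (Finset.mem_coe.mpr hu)
      have key1 : ∏ u ∈ F, (∑' m, Aw K q u m)
          = ENNReal.ofReal (∏ v ∈ F.image (· - 1), g v) := by
        rw [Finset.prod_image (by
          intro a ha b hb hab
          have := hmem a ha; have := hmem b hb
          simp only at hab; omega)]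
        rw [ENNReal.ofReal_prod_of_nonneg (fun u _ => hg0 _)]
        exact Finset.prod_congr rfl fun u hu => hfac u (hmem u hu)
      rw [key1]
      exact ENNReal.ofReal_le_ofReal (le_ciSup hb (F.image (· - 1)))
    have hBne : B ≠ ⊤ := ne_top_of_le_ne_top ENNReal.ofReal_ne_top hBle
    have hEle : ∀ E : Finset ℕ, ∏ v ∈ E, g v ≤ B.toReal := by
      intro E
      have h := ENNReal.toReal_mono hBne (hkey2 E)
      rwa [ENNReal.toReal_ofReal (Finset.prod_nonneg fun v _ => hg0 v)] at h
    have hPle : (⨆ A : Finset ℕ, ∏ v ∈ A, g v) ≤ B.toReal := ciSup_le hEle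
    calc ENNReal.ofReal (⨆ A : Finset ℕ, ∏ v ∈ A, g v)
        ≤ ENNReal.ofReal B.toReal := ENNReal.ofReal_le_ofReal hPle
      _ = B := ENNReal.ofReal_toReal hBne

lemma Phi_pos_diff {q : ℝ} (hq0 : 0 < q) (hq1 : q < 1) {K : ℕ} (hK : 1 ≤ K)
    (t : ℕ) (ht : 1 ≤ t) :
    AlphaWAux.Phi (Aw K q) ({u : ℕ | 1 ≤ u} \ {t})
      = ENNReal.ofReal ((⨆ A : Finset ℕ, ∏ v ∈ A, ((1 - q ^ (v+1)) ^ (K * (v+1)))⁻¹)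
          * (1 - q^t)^(t*K)) := by
  classical
  set P : ℝ := ⨆ A : Finset ℕ, ∏ v ∈ A, ((1 - q ^ (v+1)) ^ (K * (v+1)))⁻¹ with hP
  have hb := bddAbove_gprod hq0 hq1 K
  have hP1 : 1 ≤ P := by
    have h := le_ciSup hb (∅ : Finset ℕ)
    rw [Finset.prod_empty] at h
    exact h
  have h1t : 0 < 1 - q^t := by
    have : q ^ t < 1 := pow_lt_one₀ hq0.le hq1 (by omega)
    linarith
  have hsplit := AlphaWAux.Phi_insert (Aw K q) (Aw_zero K q) t ({u : ℕ | 1 ≤ u} \ {t})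
    (by simp)
  rw [Set.insert_diff_singleton, Set.insert_eq_of_mem (by exact ht)] at hsplit
  rw [Phi_pos_eq hq0 hq1 hK, tsum_Aw hq0 hq1 hK t ht, ← hP] at hsplit
  have ha0 : ENNReal.ofReal (((1-q^t)^(t*K))⁻¹) ≠ 0 := by
    refine (ENNReal.ofReal_pos.mpr (by positivity)).ne'
  have hcand : ENNReal.ofReal (((1-q^t)^(t*K))⁻¹) * ENNReal.ofReal (P * (1-q^t)^(t*K))
      = ENNReal.ofReal P := by
    rw [← ENNReal.ofReal_mul (by positivity)]
    congr 1
    field_simp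
  exact ENNReal_cancel ha0 ENNReal.ofReal_ne_top (hsplit.symm.trans hcand.symm)

/-- The generating function of the `α_s(n)` over all finitely supported
`n : ℤ_{>0} → ℕ` converges and has the closed form
`(∑_{t=s+1}^∞ (t−s) q^t/(1−q^t)) · ∏_{u=1}^∞ (1−q^u)^{−Ku}`
(the infinite sum and the infinite product both converge). -/
theorem alphaW_generating_function (K s : ℕ) (hK : 1 ≤ K)
    (q : ℝ) (hq0 : 0 < q) (hq1 : q < 1) :
    ∃ S P : ℝ,
      HasSum (fun m : ℕ =>
        ((m + 1 : ℝ)) * q ^ (s + 1 + m) / (1 - q ^ (s + 1 + m))) S ∧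
      HasProd (fun u : ℕ => ((1 - q ^ (u + 1)) ^ (K * (u + 1)))⁻¹) P ∧
      HasSum (fun n : {n : ℕ →₀ ℕ // n 0 = 0} =>
        (alphaW K s n.val : ℝ) * q ^ (∑ j ∈ n.val.support, j * n.val j))
        (S * P) := by
  classical
  have hb := bddAbove_gprod hq0 hq1 K
  set P : ℝ := ⨆ A : Finset ℕ, ∏ v ∈ A, ((1 - q ^ (v+1)) ^ (K * (v+1)))⁻¹ with hP
  have hgP : HasProd (fun u : ℕ => ((1 - q ^ (u + 1)) ^ (K * (u + 1)))⁻¹) P :=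
    hasProd_of_one_le_of_bddAbove (one_le_gfactor hq0 hq1 K) hb
  have hS := hasSum_S hq0 hq1 s
  set S : ℝ := ∑' m : ℕ, ((m + 1 : ℝ)) * q ^ (s + 1 + m) / (1 - q ^ (s + 1 + m)) with hSdef
  refine ⟨S, P, hS, hgP, ?_⟩
  have hP1 : 1 ≤ P := by
    have h := le_ciSup hb (∅ : Finset ℕ)
    rw [Finset.prod_empty] at h
    exact h
  have hwnn : ∀ n : ℕ →₀ ℕ, 0 ≤ (alphaW K s n : ℝ) * q ^ (∑ j ∈ n.support, j * n j) :=
    fun n => by positivity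
  -- the ENNReal-valued computation
  set G : ℕ → (ℕ →₀ ℕ) → ℝ≥0∞ := fun t n =>
    if s+1 ≤ t then ((t - s : ℕ) : ℝ≥0∞) * Cw K q t (n t) *
      ∏ u ∈ n.support.erase t, Aw K q u (n u) else 0 with hG
  have hT : ∑' (n : {n : ℕ →₀ ℕ // ↑n.support ⊆ {u : ℕ | 1 ≤ u}}),
      ENNReal.ofReal ((alphaW K s n.1 : ℝ) * q ^ (∑ j ∈ n.1.support, j * n.1 j))
      = ENNReal.ofReal (S * P) := by
    have hn0 : ∀ n : {n : ℕ →₀ ℕ // ↑n.support ⊆ {u : ℕ | 1 ≤ u}}, n.1 0 = 0 := by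
      rintro ⟨n, hn⟩
      by_contra h
      have := hn (Finsupp.mem_support_iff.mpr h)
      simp at this
    have step1 : ∀ n : {n : ℕ →₀ ℕ // ↑n.support ⊆ {u : ℕ | 1 ≤ u}},
        ENNReal.ofReal ((alphaW K s n.1 : ℝ) * q ^ (∑ j ∈ n.1.support, j * n.1 j))
        = ∑' t : ℕ, G t n.1 := by
      intro n
      rw [weight_eq K s hK hq0 n.1 (hn0 n)]
      rw [tsum_eq_sum (s := n.1.support.filter (fun t => s+1 ≤ t)) ?_]
      · refine Finset.sum_congr rfl fun t ht => ?_
        rw [Finset.mem_filter] at ht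
        simp only [hG]
        rw [if_pos ht.2]
      · intro t ht
        rw [Finset.mem_filter] at ht
        simp only [hG]
        by_cases hts : s+1 ≤ t
        · rw [if_pos hts]
          have htsup : t ∉ n.1.support := fun h => ht ⟨h, hts⟩
          have h0 : n.1 t = 0 := Finsupp.notMem_support_iff.mp htsup
          have ht1 : 1 ≤ t := by omega
          have htK : 1 ≤ t*K := Nat.one_le_iff_ne_zero.mpr (by positivity)
          have hCw0 : Cw K q t (n.1 t) = 0 := by
            simp only [Cw, h0]
            rw [Nat.choose_eq_zero_of_lt (by omega)]
            simp
          rw [hCw0]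
          ring
        · rw [if_neg hts]
    rw [tsum_congr step1, ENNReal.tsum_comm]
    have step2 : ∀ t : ℕ, ∑' (n : {n : ℕ →₀ ℕ // ↑n.support ⊆ {u : ℕ | 1 ≤ u}}), G t n.1
        = if s+1 ≤ t then
            ENNReal.ofReal (((t - s : ℕ) : ℝ) * (q^t * (1 - q^t)⁻¹) * P) else 0 := by
      intro t
      by_cases hts : s+1 ≤ t
      · rw [if_pos hts]
        have ht1 : 1 ≤ t := by omega
        have h1t : 0 < 1 - q^t := by
          have : q ^ t < 1 := pow_lt_one₀ hq0.le hq1 (by omega)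
          linarith
        have hpeel : ∑' (n : {n : ℕ →₀ ℕ // ↑n.support ⊆ {u : ℕ | 1 ≤ u}}), G t n.1
            = (∑' m, ((t - s : ℕ) : ℝ≥0∞) * Cw K q t m)
              * AlphaWAux.Phi (Aw K q) ({u : ℕ | 1 ≤ u} \ {t}) := by
          have h := AlphaWAux.peel (Aw K q) t {u : ℕ | 1 ≤ u} (by exact ht1)
            (fun m => ((t - s : ℕ) : ℝ≥0∞) * Cw K q t m)
          refine Eq.trans (tsum_congr fun n => ?_) h
          simp only [hG]
          rw [if_pos hts]
        rw [hpeel, ENNReal.tsum_mul_left, tsum_Cw hq0 hq1 hK t ht1,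
          Phi_pos_diff hq0 hq1 hK t ht1, ← hP]
        rw [← ENNReal.ofReal_natCast (t-s), ← ENNReal.ofReal_mul (by positivity),
          ← ENNReal.ofReal_mul (by positivity)]
        congr 1
        have hne : (1 - q^t) ≠ 0 := h1t.ne'
        rw [pow_succ]
        field_simp
      · rw [if_neg hts]
        have : ∀ n : {n : ℕ →₀ ℕ // ↑n.support ⊆ {u : ℕ | 1 ≤ u}}, G t n.1 = 0 := by
          intro n; simp only [hG]; rw [if_neg hts]
        rw [tsum_congr this, tsum_zero]
    rw [tsum_congr step2]
    set F : ℕ → ℝ≥0∞ := fun t => if s+1 ≤ t then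
        ENNReal.ofReal (((t - s : ℕ) : ℝ) * (q^t * (1 - q^t)⁻¹) * P) else 0 with hF
    have hsupp : Function.support F ⊆ {t : ℕ | s + 1 ≤ t} := by
      intro t ht
      by_contra h
      simp only [Set.mem_setOf_eq] at h
      apply ht
      simp only [hF]
      exact if_neg h
    rw [show (∑' (t : ℕ), F t) = ∑' (t' : {t : ℕ // s + 1 ≤ t}), F ↑t' from
      (tsum_subtype_eq_of_support_subset hsupp).symm]
    rw [← (shiftEquiv s).tsum_eq (fun t' : {t : ℕ // s + 1 ≤ t} => F ↑t')]
    have step3 : ∀ m : ℕ, (fun t' : {t : ℕ // s + 1 ≤ t} => F ↑t') ((shiftEquiv s) m)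
        = ENNReal.ofReal (((m + 1 : ℝ)) * q ^ (s + 1 + m) / (1 - q ^ (s + 1 + m)) * P) := by
      intro m
      simp only [hF, shiftEquiv_apply]
      rw [if_pos (by omega)]
      congr 1
      rw [show s+1+m - s = m+1 by omega]
      push_cast
      rw [div_eq_mul_inv]
      ring
    rw [tsum_congr step3]
    rw [← ENNReal.ofReal_tsum_of_nonneg (fun m => by
        have h1 : q ^ (s+1+m) < 1 := pow_lt_one₀ hq0.le hq1 (by omega)
        have h2 : (0:ℝ) ≤ P := by linarith
        have h3 : (0:ℝ) ≤ ((m + 1 : ℝ)) * q ^ (s + 1 + m) / (1 - q ^ (s + 1 + m)) :=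
          div_nonneg (by positivity) (by linarith)
        positivity) (hS.mul_right P).summable]
    rw [(hS.mul_right P).tsum_eq]
  -- transfer to the goal
  have hiff : ∀ n : ℕ →₀ ℕ, n 0 = 0 ↔ (↑n.support : Set ℕ) ⊆ {u : ℕ | 1 ≤ u} := by
    intro n
    constructor
    · intro h u hu
      simp only [Finset.mem_coe, Finsupp.mem_support_iff] at hu
      simp only [Set.mem_setOf_eq]
      by_contra hc
      have : u = 0 := by omega
      exact hu (this ▸ h)
    · intro h
      by_contra hc
      have := h (Finset.mem_coe.mpr (Finsupp.mem_support_iff.mpr hc))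
      simp at this
  set e : {n : ℕ →₀ ℕ // n 0 = 0} ≃ {n : ℕ →₀ ℕ // ↑n.support ⊆ {u : ℕ | 1 ≤ u}} :=
    Equiv.subtypeEquivRight hiff with he
  have hT' : ∑' (n : {n : ℕ →₀ ℕ // n 0 = 0}),
      ENNReal.ofReal ((alphaW K s n.1 : ℝ) * q ^ (∑ j ∈ n.1.support, j * n.1 j))
      = ENNReal.ofReal (S * P) := by
    rw [← hT]
    exact e.tsum_eq (fun x => ENNReal.ofReal
      ((alphaW K s x.1 : ℝ) * q ^ (∑ j ∈ x.1.support, j * x.1 j)))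
  -- bridge ENNReal → ℝ
  have hsummable : Summable (fun n : {n : ℕ →₀ ℕ // n 0 = 0} =>
      Real.toNNReal ((alphaW K s n.1 : ℝ) * q ^ (∑ j ∈ n.1.support, j * n.1 j))) := by
    apply ENNReal.tsum_coe_ne_top_iff_summable.mp
    rw [show (fun n : {n : ℕ →₀ ℕ // n 0 = 0} =>
        ((Real.toNNReal ((alphaW K s n.1 : ℝ) * q ^ (∑ j ∈ n.1.support, j * n.1 j)) : ℝ≥0) : ℝ≥0∞))
      = fun n : {n : ℕ →₀ ℕ // n 0 = 0} =>
        ENNReal.ofReal ((alphaW K s n.1 : ℝ) * q ^ (∑ j ∈ n.1.support, j * n.1 j)) from rfl]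
    rw [hT']
    exact ENNReal.ofReal_ne_top
  have htsum : (∑' n : {n : ℕ →₀ ℕ // n 0 = 0},
      Real.toNNReal ((alphaW K s n.1 : ℝ) * q ^ (∑ j ∈ n.1.support, j * n.1 j)) : ℝ≥0)
      = Real.toNNReal (S * P) := by
    have hc := ENNReal.coe_tsum hsummable
    rw [show (fun n : {n : ℕ →₀ ℕ // n 0 = 0} =>
        ((Real.toNNReal ((alphaW K s n.1 : ℝ) * q ^ (∑ j ∈ n.1.support, j * n.1 j)) : ℝ≥0) : ℝ≥0∞))
      = fun n : {n : ℕ →₀ ℕ // n 0 = 0} =>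
        ENNReal.ofReal ((alphaW K s n.1 : ℝ) * q ^ (∑ j ∈ n.1.support, j * n.1 j)) from rfl] at hc
    rw [hT'] at hc
    have h2 : ((∑' n : {n : ℕ →₀ ℕ // n 0 = 0},
        Real.toNNReal ((alphaW K s n.1 : ℝ) * q ^ (∑ j ∈ n.1.support, j * n.1 j)) : ℝ≥0) : ℝ≥0∞)
        = (((S * P).toNNReal : ℝ≥0) : ℝ≥0∞) := hc
    exact_mod_cast h2
  have hfinalNN : HasSum (fun n : {n : ℕ →₀ ℕ // n 0 = 0} =>
      Real.toNNReal ((alphaW K s n.1 : ℝ) * q ^ (∑ j ∈ n.1.support, j * n.1 j)))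
      (Real.toNNReal (S * P)) := hsummable.hasSum_iff.mpr htsum
  have hfinal := NNReal.hasSum_coe.mpr hfinalNN
  have hSP : 0 ≤ S * P := by
    have hS0 : 0 ≤ S := by
      rw [hSdef]
      refine tsum_nonneg fun m => ?_
      have h1 : q ^ (s+1+m) < 1 := pow_lt_one₀ hq0.le hq1 (by omega)
      exact div_nonneg (by positivity) (by linarith)
    nlinarith
  rw [Real.coe_toNNReal _ hSP] at hfinal
  refine HasSum.congr_fun hfinal fun n => ?_
  rw [Real.coe_toNNReal _ (hwnn n.1)]
end

section
/- Let K ≥ 2 and s ≥ 1 be integers, let λ : Fin K → ℂ, and set b(X) = ∏_{i=1}^{K} (X − λ_i). Assume λ_1 − λ_2 = s, and that for every ordered pair (i, j) with i ≠ j other than (1,2) and (2,1), the difference λ_i − λ_j is not an integer. Then for every integer t ≥ 1, the degree of l.c.m.(b(X), b(X−1), …, b(X−t+1)) equals tK − max(t − s, 0). -/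
open Polynomial Finset

/-- Let `b(X) = ∏_{i=1}^K (X − λ_i)` with `K ≥ 2`, `λ_1 − λ_2 = s ≥ 1` a positive
integer, and all other differences `λ_i − λ_j` (for ordered pairs `(i,j)`, `i ≠ j`,
other than `(1,2)` and `(2,1)`) not integers.  Then for every `t ≥ 1` the degree of
`l.c.m.(b(X), b(X−1), …, b(X−t+1))` equals `tK − max(t − s, 0)`. -/
theorem degree_lcm_shifted (K s : ℕ) (hK : 2 ≤ K) (hs : 1 ≤ s)
    (lam : Fin K → ℂ)
    (h12 : lam ⟨0, by omega⟩ - lam ⟨1, by omega⟩ = (s : ℂ))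
    (hgen : ∀ i j : Fin K, i ≠ j →
      ¬(i = ⟨0, by omega⟩ ∧ j = ⟨1, by omega⟩) →
      ¬(i = ⟨1, by omega⟩ ∧ j = ⟨0, by omega⟩) →
      ∀ k : ℤ, lam i - lam j ≠ (k : ℂ))
    (t : ℕ) (ht : 1 ≤ t) :
    ((range t).lcm fun m =>
        (∏ i : Fin K, (X - Polynomial.C (lam i))).comp
          (X - Polynomial.C (m : ℂ))).natDegree
      = t * K - (t - s) := by
  set i0 : Fin K := ⟨0, by omega⟩ with hi0
  set i1 : Fin K := ⟨1, by omega⟩ with hi1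
  have hne01 : i0 ≠ i1 := by simp [hi0, hi1, Fin.ext_iff]
  -- key difference lemma
  have hdiff : ∀ i j : Fin K, i ≠ j → ∀ k : ℤ, lam i - lam j = (k : ℂ) →
      (i = i0 ∧ j = i1 ∧ k = s) ∨ (i = i1 ∧ j = i0 ∧ k = -(s:ℤ)) := by
    intro i j hij k hk
    by_cases h1 : i = i0 ∧ j = i1
    · left
      refine ⟨h1.1, h1.2, ?_⟩
      rw [h1.1, h1.2, h12] at hk
      exact_mod_cast hk.symm
    by_cases h2 : i = i1 ∧ j = i0
    · right
      refine ⟨h2.1, h2.2, ?_⟩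
      rw [h2.1, h2.2] at hk
      have : lam i0 - lam i1 = -(k:ℂ) := by rw [← hk]; ring
      rw [h12] at this
      have : ((s:ℤ):ℂ) = ((-k : ℤ) : ℂ) := by push_cast; rw [this]
      have := Int.cast_injective (α := ℂ) this
      omega
    · exact absurd hk (hgen i j hij h1 h2 k)
  have hlaminj : Function.Injective lam := by
    intro i j h
    by_contra hij
    have := hdiff i j hij 0 (by simp [h])
    rcases this with ⟨_,_,h0⟩|⟨_,_,h0⟩ <;> omega
  -- the shifted polynomial as a product
  set f : ℕ → ℂ[X] := fun m =>
      (∏ i : Fin K, (X - Polynomial.C (lam i))).comp (X - Polynomial.C (m : ℂ)) with hf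
  have hcomp : ∀ m : ℕ, f m = ∏ i : Fin K, (X - Polynomial.C (lam i + m)) := by
    intro m
    show (∏ i : Fin K, (X - Polynomial.C (lam i))).comp (X - Polynomial.C (m : ℂ)) = _
    rw [Polynomial.prod_comp]
    refine Finset.prod_congr rfl fun i _ => ?_
    simp [sub_comp, sub_sub, ← C_add, add_comm]
  -- the set of roots
  set W : Finset (ℕ × Fin K) := (range t) ×ˢ (univ : Finset (Fin K)) with hW
  set g : ℕ × Fin K → ℂ := fun p => lam p.2 + p.1 with hg
  set S : Finset ℂ := W.image g with hS
  set P : ℂ[X] := ∏ r ∈ S, (X - Polynomial.C r) with hP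
  have hPne : P ≠ 0 := by
    rw [hP]
    exact prod_ne_zero_iff.2 fun r _ => X_sub_C_ne_zero r
  have hfP : ∀ m ∈ range t, f m ∣ P := by
    intro m hm
    rw [hcomp m]
    have hinj : Set.InjOn (fun i : Fin K => lam i + m) ↑(univ : Finset (Fin K)) := by
      intro i _ j _ h
      exact hlaminj (by linear_combination h)
    have hpi := Finset.prod_image (f := fun r : ℂ => X - Polynomial.C r)
      (g := fun i : Fin K => lam i + (m:ℂ)) (s := univ)
      (fun x hx y hy h => hinj hx hy h)
    rw [← hpi]
    apply Finset.prod_dvd_prod_of_subset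
    intro r hr
    simp only [Finset.mem_image, Finset.mem_univ, true_and] at hr
    obtain ⟨i, hi⟩ := hr
    rw [hS]
    exact Finset.mem_image.2 ⟨(m, i), by simp [hW, hg, Finset.mem_range.1 hm, hi], by simp [hg, hi]⟩
  have hlcmP : (range t).lcm f ∣ P := Finset.lcm_dvd hfP
  have hPlcm : P ∣ (range t).lcm f := by
    rw [hP]
    refine Finset.prod_dvd_of_coprime ?_ ?_
    · intro a _ b _ hab
      exact isCoprime_X_sub_C_of_isUnit_sub ((sub_ne_zero_of_ne hab).isUnit)
    · intro r hr
      rw [hS] at hr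
      obtain ⟨⟨m, i⟩, hmem, hrfl⟩ := Finset.mem_image.1 hr
      simp only [hW, Finset.mem_product, Finset.mem_range] at hmem
      refine dvd_trans ?_ (Finset.dvd_lcm (Finset.mem_range.2 hmem.1))
      rw [hcomp m, ← hrfl]
      exact Finset.dvd_prod_of_mem _ (Finset.mem_univ i)
  have hlcmne : (range t).lcm f ≠ 0 := fun h => hPne (zero_dvd_iff.1 (h ▸ hlcmP))
  have hdeg : ((range t).lcm f).natDegree = P.natDegree :=
    le_antisymm (Polynomial.natDegree_le_of_dvd hlcmP hPne)
      (Polynomial.natDegree_le_of_dvd hPlcm hlcmne)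
  have hPdeg : P.natDegree = S.card := by
    rw [hP, Polynomial.natDegree_prod _ _ (fun r _ => X_sub_C_ne_zero r)]
    simp
  -- now count S
  set B : Finset (ℕ × Fin K) := (Finset.Ico s t) ×ˢ ({i1} : Finset (Fin K)) with hB
  set T : Finset (ℕ × Fin K) := W \ B with hT
  have hBW : B ⊆ W := by
    intro p hp
    simp only [hB, hW, Finset.mem_product, Finset.mem_Ico, Finset.mem_singleton,
      Finset.mem_range, Finset.mem_univ] at hp ⊢
    exact ⟨hp.1.2, trivial⟩
  have himg : T.image g = S := by
    rw [hS]
    apply Finset.Subset.antisymm (Finset.image_subset_image (Finset.sdiff_subset))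
    intro r hr
    obtain ⟨⟨m, i⟩, hmem, hrfl⟩ := Finset.mem_image.1 hr
    by_cases hb : (m, i) ∈ B
    · simp only [hB, Finset.mem_product, Finset.mem_Ico, Finset.mem_singleton] at hb
      obtain ⟨⟨hsm, hmt⟩, hii⟩ := hb
      refine Finset.mem_image.2 ⟨(m - s, i0), ?_, ?_⟩
      · simp only [hT, Finset.mem_sdiff, hW, hB, Finset.mem_product, Finset.mem_range,
          Finset.mem_univ, Finset.mem_Ico, Finset.mem_singleton]
        exact ⟨⟨by omega, trivial⟩, fun h => hne01 h.2⟩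
      · rw [← hrfl]
        simp only [hg, hii]
        have h0 : lam i0 = lam i1 + s := by linear_combination h12
        rw [h0]
        have : ((m - s : ℕ) : ℂ) = (m : ℂ) - s := by
          push_cast [hsm]; ring
        rw [this]; ring
    · exact Finset.mem_image.2 ⟨(m, i), Finset.mem_sdiff.2 ⟨hmem, hb⟩, hrfl⟩
  have hginj : Set.InjOn g ↑T := by
    intro p hp q hq hpq
    simp only [hT, Finset.coe_sdiff, Set.mem_diff, Finset.mem_coe, Finset.mem_sdiff, hW, hB,
      Finset.mem_product, Finset.mem_range, Finset.mem_univ, Finset.mem_Ico,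
      Finset.mem_singleton] at hp hq
    obtain ⟨⟨hpt, -⟩, hpB⟩ := hp
    obtain ⟨⟨hqt, -⟩, hqB⟩ := hq
    simp only [hg] at hpq
    by_cases hij : p.2 = q.2
    · have : ((p.1 : ℂ)) = q.1 := by
        rw [hij] at hpq; linear_combination hpq
      have : p.1 = q.1 := Nat.cast_injective this
      exact Prod.ext this hij
    · exfalso
      have hk : lam p.2 - lam q.2 = (((q.1 : ℤ) - p.1 : ℤ) : ℂ) := by
        push_cast; linear_combination hpq
      rcases hdiff _ _ hij _ hk with ⟨h1, h2, h3⟩ | ⟨h1, h2, h3⟩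
      · -- p.2 = i0, q.2 = i1, q.1 - p.1 = s, so q.1 ≥ s : q ∈ B
        exact hqB ⟨⟨by omega, hqt⟩, h2⟩
      · exact hpB ⟨⟨by omega, hpt⟩, h1⟩
  have hScard : S.card = t * K - (t - s) := by
    rw [← himg, Finset.card_image_of_injOn hginj, hT, Finset.card_sdiff_of_subset hBW]
    simp [hW, hB, Finset.card_product]
  rw [hdeg, hPdeg, hScard]
end

section
/- Let Y be a Young diagram, with cells (i, j) indexed by 0-based row index i and column index j; the content of cell (i, j) is j − i. Let h be the number of diagonal cells of Y (cells of the form (i, i)), and for each i with 0 ≤ i < h set m_i = (length of row i of Y) − i ≥ 1 (the arm of the i-th principal hook, including the diagonal cell) and n_i = (length of column i of Y) − i − 1 ≥ 0 (the leg of the i-th principal hook). Then for every complex number C: ∏_{(i,j) ∈ Y} (C − (j − i)) = ∏_{i=0}^{h−1} ( ∏_{t=0}^{m_i − 1} (C − t) ) · ( ∏_{t=1}^{n_i} (C + t) ). -/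
open Finset

lemma diag_card_lemma (Y : YoungDiagram) (i : ℕ) :
    (i, i) ∈ Y ↔ i < (Y.cells.filter fun c => c.1 = c.2).card := by
  set D := Y.cells.filter fun c => c.1 = c.2 with hD
  have hmem : ∀ k, (k, k) ∈ D ↔ (k, k) ∈ Y := by
    intro k; simp [hD, YoungDiagram.mem_cells]
  have hdc : ∀ k m : ℕ, k ≤ m → (m, m) ∈ Y → (k, k) ∈ Y := by
    intro k m hk hm; exact Y.up_left_mem hk hk hm
  have hDeq : D = (range D.card).image (fun k => (k, k)) := by
    have hDform : ∀ c ∈ D, c = (c.1, c.1) := by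
      intro c hc
      simp only [hD, mem_filter] at hc
      have := hc.2
      ext <;> simp [← this]
    -- D = image of S := D.image fst
    have key : D = (D.image Prod.fst).image (fun k => (k, k)) := by
      ext c
      simp only [mem_image]
      constructor
      · intro hc; exact ⟨c.1, ⟨c, hc, rfl⟩, (hDform c hc).symm⟩
      · rintro ⟨k, ⟨c', hc', rfl⟩, rfl⟩
        rwa [← hDform c' hc']
    set S := D.image Prod.fst with hS
    have hScard : S.card = D.card := by
      rw [hS]
      apply Finset.card_image_of_injOn
      intro a ha b hb hab
      rw [hDform a ha, hDform b hb, hab]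
    have hSdc : ∀ k m : ℕ, k ≤ m → m ∈ S → k ∈ S := by
      intro k m hk hm
      simp only [hS, mem_image] at hm ⊢
      obtain ⟨c, hc, rfl⟩ := hm
      refine ⟨(k, k), ?_, rfl⟩
      rw [hDform c hc] at hc
      rw [hmem] at hc ⊢
      exact hdc _ _ hk hc
    have hSrange : S = range S.card := by
      have hsub : S ⊆ range S.card := by
        intro k hk
        rw [mem_range]
        by_contra hlt
        push_neg at hlt
        have : range (k + 1) ⊆ S := by
          intro j hj
          rw [mem_range] at hj
          exact hSdc j k (Nat.lt_succ_iff.mp hj) hk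
        have := Finset.card_le_card this
        simp at this
        omega
      exact Finset.eq_of_subset_of_card_le hsub (by simp)
    conv_lhs => rw [key, hSrange, hScard]
  constructor
  · intro h
    have : (i, i) ∈ D := (hmem i).mpr h
    rw [hDeq] at this
    simp only [mem_image, mem_range] at this
    obtain ⟨k, hk, hkk⟩ := this
    obtain ⟨rfl⟩ : k = i := by injection hkk
    exact hk
  · intro h
    have : (i, i) ∈ D := by
      rw [hDeq]; simp only [mem_image, mem_range]; exact ⟨i, h, rfl⟩
    exact (hmem i).mp this

/-- Principal-hook factorization of the content product of a Young diagram.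
With `h` the number of diagonal cells, `m_i = rowLen i − i` the arm (including
the diagonal cell) and `n_i = colLen i − i − 1` the leg of the `i`-th principal
hook, for every complex `C`:
`∏_{(i,j)∈Y} (C − (j−i)) = ∏_{i<h} (∏_{t=0}^{m_i−1} (C−t)) · (∏_{t=1}^{n_i} (C+t))`. -/
theorem content_product_hook_factorization (Y : YoungDiagram) (C : ℂ) :
    ∏ c ∈ Y.cells, (C - ((c.2 : ℂ) - (c.1 : ℂ)))
      = ∏ i ∈ range ((Y.cells.filter fun c => c.1 = c.2).card),
          ((∏ t ∈ range (Y.rowLen i - i), (C - (t : ℂ))) *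
            ∏ t ∈ Finset.Icc 1 (Y.colLen i - i - 1), (C + (t : ℂ))) := by
  set h := (Y.cells.filter fun c => c.1 = c.2).card with hh
  have hmaps : ∀ c ∈ Y.cells, min c.1 c.2 ∈ range h := by
    intro c hc
    rw [YoungDiagram.mem_cells] at hc
    rw [mem_range, ← diag_card_lemma]
    exact Y.up_left_mem (min_le_left _ _) (min_le_right _ _) hc
  rw [← Finset.prod_fiberwise_of_maps_to hmaps]
  apply Finset.prod_congr rfl
  intro i hi
  rw [mem_range, ← diag_card_lemma] at hi
  have hrow : i < Y.rowLen i := YoungDiagram.mem_iff_lt_rowLen.mp hi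
  have hcol : i < Y.colLen i := YoungDiagram.mem_iff_lt_colLen.mp hi
  have hunion : Y.cells.filter (fun c => min c.1 c.2 = i)
      = ((range (Y.rowLen i - i)).image fun t => (i, i + t))
        ∪ ((Finset.Icc 1 (Y.colLen i - i - 1)).image fun t => (i + t, i)) := by
    ext c
    obtain ⟨a, b⟩ := c
    simp only [mem_filter, YoungDiagram.mem_cells, mem_union, mem_image, mem_range,
      Finset.mem_Icc, Prod.mk.injEq]
    constructor
    · rintro ⟨hmem, hmin⟩
      rcases le_or_gt a b with hab | hab
      · left
        have ha : a = i := by simpa [min_eq_left hab] using hmin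
        subst ha
        refine ⟨b - a, ?_, rfl, by omega⟩
        have := YoungDiagram.mem_iff_lt_rowLen.mp hmem
        omega
      · right
        have hb : b = i := by have := min_eq_right hab.le; omega
        subst hb
        refine ⟨a - b, ?_, by omega, rfl⟩
        have := YoungDiagram.mem_iff_lt_colLen.mp hmem
        omega
    · rintro (⟨t, ht, rfl, rfl⟩ | ⟨t, ht, rfl, rfl⟩)
      · exact ⟨YoungDiagram.mem_iff_lt_rowLen.mpr (by omega), by omega⟩
      · exact ⟨YoungDiagram.mem_iff_lt_colLen.mpr (by omega), by omega⟩
  rw [hunion, Finset.prod_union, Finset.prod_image, Finset.prod_image]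
  · congr 1
    · apply Finset.prod_congr rfl; intro t _; push_cast; ring
    · apply Finset.prod_congr rfl; intro t _; push_cast; ring
  · intro x _ y _ hxy; simpa using hxy
  · intro x _ y _ hxy; simp only [Prod.mk.injEq] at hxy; omega
  · rw [Finset.disjoint_left]
    rintro c hc hc'
    simp only [mem_image, mem_range, Finset.mem_Icc] at hc hc'
    obtain ⟨t, ht, rfl⟩ := hc
    obtain ⟨s, hs, heq⟩ := hc'
    simp only [Prod.mk.injEq] at heq
    omega
end

section
/- Let C be a real number. Then the product ∏_{(i,j) ∈ Y} (C − (j − i)) is nonnegative for every Young diagram Y if and only if C is a nonnegative integer. -/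
open Finset

/-- Single-row Young diagram with `m` cells. -/
def rowYD (m : ℕ) : YoungDiagram :=
  ⟨(Finset.range m).image (fun j => ((0 : ℕ), j)), by
    intro p q hle hp
    simp only [Finset.coe_image, Set.mem_image, Finset.mem_coe, Finset.mem_range] at hp ⊢
    obtain ⟨j, hj, rfl⟩ := hp
    refine ⟨q.2, lt_of_le_of_lt hle.2 hj, ?_⟩
    have h1 : q.1 = 0 := Nat.le_zero.mp hle.1
    exact Prod.ext h1.symm rfl⟩

lemma rowYD_prod (C : ℝ) (m : ℕ) :
    ∏ c ∈ (rowYD m).cells, (C - ((c.2 : ℝ) - (c.1 : ℝ)))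
      = ∏ j ∈ Finset.range m, (C - (j : ℝ)) := by
  rw [show (rowYD m).cells = (Finset.range m).image (fun j => ((0 : ℕ), j)) from rfl,
    Finset.prod_image]
  · simp
  · intro a _ b _ h
    exact (Prod.ext_iff.mp h).2

lemma mem_rowYD {m j : ℕ} : ((0 : ℕ), j) ∈ rowYD m ↔ j < m := by
  rw [← YoungDiagram.mem_cells]
  simp [rowYD]

/-- Unitarity condition for the `K = 1` quasifinite `W_{1+∞}` module: for a real
central charge `C`, the content product `∏_{(i,j)∈Y} (C − (j−i))` is nonnegative
for every Young diagram `Y` if and only if `C` is a nonnegative integer. -/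
theorem content_product_nonneg_iff (C : ℝ) :
    (∀ Y : YoungDiagram, 0 ≤ ∏ c ∈ Y.cells, (C - ((c.2 : ℝ) - (c.1 : ℝ))))
      ↔ ∃ n : ℕ, C = (n : ℝ) := by
  constructor
  · intro h
    -- C ≥ 0 from the single-cell diagram
    have hC0 : 0 ≤ C := by
      have := h (rowYD 1)
      rwa [rowYD_prod, Finset.prod_range_one, Nat.cast_zero, sub_zero] at this
    set n : ℕ := ⌊C⌋.toNat with hn
    have hfloor : (⌊C⌋ : ℝ) ≤ C := Int.floor_le C
    have hfloor0 : (0 : ℤ) ≤ ⌊C⌋ := Int.floor_nonneg.mpr hC0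
    have hncast : ((n : ℕ) : ℝ) = (⌊C⌋ : ℝ) := by
      rw [hn]; exact_mod_cast congrArg (Int.cast : ℤ → ℝ) (Int.toNat_of_nonneg hfloor0)
    have hnle : (n : ℝ) ≤ C := by rw [hncast]; exact hfloor
    have hlt : C < (n : ℝ) + 1 := by
      rw [hncast]; exact Int.lt_floor_add_one C
    by_cases hEq : C = (n : ℝ)
    · exact ⟨n, hEq⟩
    · exfalso
      have hnltC : (n : ℝ) < C := lt_of_le_of_ne hnle (fun h' => hEq h'.symm)
      have key := h (rowYD (n + 2))
      rw [rowYD_prod, Finset.prod_range_succ] at key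
      have hpos : 0 < ∏ j ∈ Finset.range (n + 1), (C - (j : ℝ)) := by
        apply Finset.prod_pos
        intro j hj
        have : (j : ℝ) ≤ (n : ℝ) := by
          exact_mod_cast Nat.lt_succ_iff.mp (Finset.mem_range.mp hj)
        linarith
      have hneg : C - ((n + 1 : ℕ) : ℝ) < 0 := by
        push_cast
        linarith
      nlinarith
  · rintro ⟨n, rfl⟩ Y
    by_cases hz : ∃ c ∈ Y.cells, c.2 = c.1 + n
    · obtain ⟨c, hc, hcn⟩ := hz
      rw [Finset.prod_eq_zero hc]
      rw [hcn]; push_cast; ring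
    · push_neg at hz
      apply Finset.prod_nonneg
      intro c hc
      have hlt : c.2 < c.1 + n := by
        by_contra hge
        push_neg at hge
        have hmem : ((c.1, c.1 + n) : ℕ × ℕ) ∈ Y := by
          apply Y.isLowerSet _ hc
          exact ⟨le_refl _, hge⟩
        exact hz _ hmem rfl
      have : (c.2 : ℝ) < (c.1 : ℝ) + (n : ℝ) := by exact_mod_cast hlt
      linarith
end

section
/- Let n ≥ 1 and let u, v : Fin n → ℝ be tuples of pairwise distinct real numbers with 0 < u_i < 1 and 0 < v_i < 1 for all i. For a weakly decreasing function λ : Fin n → ℕ (a partition with at most n parts, columns 0-based), define the Schur polynomial value s_λ(u) = det(M_λ(u)) / det(M_0(u)), where M_λ(u) is the n × n matrix with entries (M_λ(u))_{ij} = u_i^{λ_j + n − 1 − j} and M_0(u) is the Vandermonde matrix with entries u_i^{n−1−j} (which has nonzero determinant since the u_i are distinct). Then the family (s_λ(u)·s_λ(v)), indexed by all weakly decreasing λ : Fin n → ℕ, is summable and ∑_λ s_λ(u)·s_λ(v) = ∏_{i=1}^{n} ∏_{j=1}^{n} (1 − u_i v_j)^{−1}. -/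
open Finset

open Matrix


lemma hasSum_pi_geom : ∀ (m : ℕ) (w : Fin m → ℝ), (∀ j, 0 ≤ w j) → (∀ j, w j < 1) →
    HasSum (fun k : Fin m → ℕ => ∏ j, w j ^ k j) (∏ j, (1 - w j)⁻¹) := by
  intro m
  induction m with
  | zero =>
    intro w _ _
    simp only [Finset.univ_eq_empty, Finset.prod_empty]
    have := hasSum_single (f := fun _ : Fin 0 → ℕ => (1:ℝ)) (fun i => i.elim0)
      (fun b' hb' => absurd (funext fun x => x.elim0) hb')
    simpa using this
  | succ m ih =>
    intro w h0 h1
    have hgeo : HasSum (fun k : ℕ => w 0 ^ k) (1 - w 0)⁻¹ :=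
      hasSum_geometric_of_lt_one (h0 0) (h1 0)
    have hih : HasSum (fun k : Fin m → ℕ => ∏ j : Fin m, w j.succ ^ k j)
        (∏ j : Fin m, (1 - w j.succ)⁻¹) := ih (fun j : Fin m => w j.succ) (fun j => h0 _) (fun j => h1 _)
    have hs : Summable (fun p : ℕ × (Fin m → ℕ) =>
        (w 0 ^ p.1) * ∏ j : Fin m, w j.succ ^ p.2 j) := by
      have hf' : 0 ≤ (fun k : ℕ => w 0 ^ k) := fun k => pow_nonneg (h0 0) k
      have hg' : 0 ≤ (fun k : Fin m → ℕ => ∏ j : Fin m, w j.succ ^ k j) :=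
        fun k => Finset.prod_nonneg fun j _ => pow_nonneg (h0 _) _
      exact Summable.mul_of_nonneg (f := fun k : ℕ => w 0 ^ k)
        (g := fun k : Fin m → ℕ => ∏ j : Fin m, w j.succ ^ k j) hgeo.summable hih.summable hf' hg'
    have hprod : HasSum (fun p : ℕ × (Fin m → ℕ) => (w 0 ^ p.1) * ∏ j : Fin m, w j.succ ^ p.2 j)
        ((1 - w 0)⁻¹ * ∏ j : Fin m, (1 - w j.succ)⁻¹) := HasSum.mul (f := fun k : ℕ => w 0 ^ k)
        (g := fun k : Fin m → ℕ => ∏ j : Fin m, w j.succ ^ k j) hgeo hih hs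
    rw [Fin.prod_univ_succ]
    rw [← Equiv.hasSum_iff (Fin.consEquiv fun _ : Fin (m+1) => ℕ)]
    have heq : ((fun k : Fin (m+1) → ℕ => ∏ j, w j ^ k j) ∘ (Fin.consEquiv fun _ : Fin (m+1) => ℕ))
        = fun p : ℕ × (Fin m → ℕ) => (w 0 ^ p.1) * ∏ j : Fin m, w j.succ ^ p.2 j := by
      funext p
      simp [Function.comp, Fin.prod_univ_succ, Fin.consEquiv]
    rw [heq]
    exact hprod

lemma hasSum_detPow (n : ℕ) (u v : Fin n → ℝ)
    (hu0 : ∀ i, 0 < u i) (hu1 : ∀ i, u i < 1) (hv0 : ∀ i, 0 < v i) (hv1 : ∀ i, v i < 1) :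
    HasSum (fun k : Fin n → ℕ =>
        (Matrix.of fun i j : Fin n => u i ^ k j).det * ∏ j, v j ^ k j)
      ((Matrix.of fun i j : Fin n => (1 - u i * v j)⁻¹).det) := by
  classical
  have key : ∀ σ : Equiv.Perm (Fin n),
      HasSum (fun k : Fin n → ℕ =>
          ((Equiv.Perm.sign σ : ℤ) : ℝ) * ∏ j, (u (σ j) * v j) ^ k j)
        (((Equiv.Perm.sign σ : ℤ) : ℝ) * ∏ j, (1 - u (σ j) * v j)⁻¹) := by
    intro σ
    refine HasSum.mul_left _ (hasSum_pi_geom n (fun j => u (σ j) * v j) ?_ ?_)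
    · intro j; exact mul_nonneg (hu0 _).le (hv0 _).le
    · intro j; show u (σ j) * v j < 1; nlinarith [hu0 (σ j), hu1 (σ j), hv0 j, hv1 j]
  have h2 := hasSum_sum (f := fun (σ : Equiv.Perm (Fin n)) (k : Fin n → ℕ) =>
      ((Equiv.Perm.sign σ : ℤ) : ℝ) * ∏ j, (u (σ j) * v j) ^ k j)
    (a := fun σ => ((Equiv.Perm.sign σ : ℤ) : ℝ) * ∏ j, (1 - u (σ j) * v j)⁻¹)
    (s := Finset.univ) (fun σ _ => key σ)
  have hdet : (Matrix.of fun i j : Fin n => (1 - u i * v j)⁻¹).det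
      = ∑ σ : Equiv.Perm (Fin n), ((Equiv.Perm.sign σ : ℤ) : ℝ) * ∏ j, (1 - u (σ j) * v j)⁻¹ := by
    rw [Matrix.det_apply']
    rfl
  have hfun : ∀ k : Fin n → ℕ,
      (∑ σ : Equiv.Perm (Fin n), ((Equiv.Perm.sign σ : ℤ) : ℝ) * ∏ j, (u (σ j) * v j) ^ k j)
        = (Matrix.of fun i j : Fin n => u i ^ k j).det * ∏ j, v j ^ k j := by
    intro k
    rw [Matrix.det_apply', Finset.sum_mul]
    refine Finset.sum_congr rfl fun σ _ => ?_
    simp only [Matrix.of_apply, mul_pow, Finset.prod_mul_distrib, mul_assoc]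
  rw [hdet]
  simp only [hfun] at h2
  exact h2

lemma strictAnti_gap {n : ℕ} {m : Fin n → ℕ} (hm : StrictAnti m) :
    ∀ (d : ℕ) (i j : Fin n), i.val + d ≤ j.val → m j + d ≤ m i := by
  intro d
  induction d with
  | zero =>
    intro i j h
    simpa using hm.antitone (Fin.le_def.2 (by omega))
  | succ d ih =>
    intro i j h
    have hj := j.isLt
    have hj1 : j.val - 1 < n := by omega
    have h1 : i.val + d ≤ (⟨j.val - 1, hj1⟩ : Fin n).val := by simp; omega
    have h2 := ih i ⟨j.val - 1, hj1⟩ h1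
    have h3 : (⟨j.val - 1, hj1⟩ : Fin n) < j := by rw [Fin.lt_def]; simp; omega
    have h4 := hm h3
    omega

lemma strictAnti_lb {n : ℕ} {m : Fin n → ℕ} (hm : StrictAnti m) (j : Fin n) :
    n - 1 - j.val ≤ m j := by
  have hj := j.isLt
  have := strictAnti_gap hm (n - 1 - j.val) j ⟨n - 1, by omega⟩ (by simp; omega)
  omega

def muF (n : ℕ) (l : Fin n → ℕ) : Fin n → ℕ := fun j => l j + (n - 1 - j.val)

lemma strictAnti_muF {n : ℕ} {l : Fin n → ℕ} (hl : Antitone l) : StrictAnti (muF n l) := by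
  intro a b hab
  have h1 := hl hab.le
  have h2 := Fin.lt_def.1 hab
  have := a.isLt
  have := b.isLt
  simp only [muF]
  omega

lemma strictMono_le_apply {n : ℕ} {f : Fin n → Fin n} (hf : StrictMono f) (x : Fin n) :
    x ≤ f x := by
  suffices h : ∀ t : ℕ, ∀ x : Fin n, x.val = t → x.val ≤ (f x).val by
    exact Fin.le_def.2 (h x.val x rfl)
  intro t
  induction t using Nat.strong_induction_on with
  | _ t ih =>
    intro x hx
    rcases Nat.eq_zero_or_pos t with h0 | hpos
    · omega
    · have hx' : t - 1 < n := by have := x.isLt; omega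
      have hlt : (⟨t - 1, hx'⟩ : Fin n) < x := by rw [Fin.lt_def]; simp; omega
      have h1 := Fin.lt_def.1 (hf hlt)
      have h2 := ih (t - 1) (by omega) ⟨t - 1, hx'⟩ rfl
      simp at h1 h2
      omega

def toInj (n : ℕ) : {l : Fin n → ℕ // Antitone l} × Equiv.Perm (Fin n) →
    {k : Fin n → ℕ // Function.Injective k} :=
  fun p => ⟨muF n p.1.val ∘ p.2, ((strictAnti_muF p.1.prop).injective).comp p.2.injective⟩

lemma toInj_bijective (n : ℕ) : Function.Bijective (toInj n) := by
  constructor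
  · rintro ⟨⟨l, hl⟩, π⟩ ⟨⟨l', hl'⟩, π'⟩ hsq
    have hfun : muF n l ∘ π = muF n l' ∘ π' := congrArg Subtype.val hsq
    have hmu : ∀ y, muF n l' y = muF n l ((π'.symm.trans π) y) := by
      intro y
      have := congrFun hfun (π'.symm y)
      simpa using this.symm
    set ρ : Equiv.Perm (Fin n) := π'.symm.trans π with hρ
    have hmonoρ : StrictMono (ρ : Fin n → Fin n) := by
      intro y y' hy
      have h1 : muF n l' y' < muF n l' y := strictAnti_muF hl' hy
      rw [hmu y, hmu y'] at h1
      exact ((strictAnti_muF hl).lt_iff_gt).1 h1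
    have hsymmρ : StrictMono (ρ.symm : Fin n → Fin n) := by
      intro a b hab
      rw [← hmonoρ.lt_iff_lt]
      simpa using hab
    have hid : ∀ y, ρ y = y := by
      intro y
      have h1 : y ≤ ρ y := strictMono_le_apply hmonoρ y
      have h2 : ρ y ≤ ρ.symm (ρ y) := strictMono_le_apply hsymmρ (ρ y)
      rw [Equiv.symm_apply_apply] at h2
      exact le_antisymm h2 h1
    have hππ' : π = π' := by
      refine Equiv.ext fun x => ?_
      have := hid (π' x)
      simp only [hρ, Equiv.trans_apply, Equiv.symm_apply_apply] at this
      exact this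
    subst hππ'
    have hl2 : l = l' := by
      funext j
      have := congrFun hfun (π.symm j)
      simp only [Function.comp, Equiv.apply_symm_apply, muF] at this
      omega
    subst hl2
    rfl
  · rintro ⟨k, hk⟩
    classical
    set ρ := Tuple.sort k with hρ
    have hg : StrictMono (k ∘ ρ) :=
      (Tuple.monotone_sort k).strictMono_of_injective (hk.comp ρ.injective)
    set m : Fin n → ℕ := fun j => (k ∘ ρ) j.rev with hm
    have hmanti : StrictAnti m := by
      intro a b hab
      exact hg (Fin.rev_lt_rev.2 hab)
    set l : Fin n → ℕ := fun j => m j - (n - 1 - j.val) with hldef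
    have hml : ∀ j, muF n l j = m j := by
      intro j
      have := strictAnti_lb hmanti j
      simp only [muF, hldef]
      omega
    have hlant : Antitone l := by
      intro a b hab
      rcases eq_or_lt_of_le hab with h | h
      · rw [h]
      · have hb := b.isLt
        have h1 := strictAnti_gap hmanti (b.val - a.val) a b (by have := Fin.lt_def.1 h; omega)
        have h2 := strictAnti_lb hmanti b
        simp only [hldef]
        omega
    refine ⟨⟨⟨l, hlant⟩, ρ.symm.trans Fin.revPerm⟩, ?_⟩
    apply Subtype.ext
    funext i
    show muF n l ((ρ.symm.trans Fin.revPerm) i) = k i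
    rw [hml]
    show (k ∘ ρ) (Fin.rev (Fin.rev (ρ.symm i))) = k i
    rw [Fin.rev_rev]
    simp

lemma perm_fiber_sum (n : ℕ) (u v : Fin n → ℝ) (l : Fin n → ℕ) :
    (∑ π : Equiv.Perm (Fin n),
        (Matrix.of fun i j : Fin n => u i ^ (muF n l (π j))).det * ∏ j, v j ^ (muF n l (π j)))
      = (Matrix.of fun i j : Fin n => u i ^ (muF n l j)).det
        * (Matrix.of fun i j : Fin n => v i ^ (muF n l j)).det := by
  classical
  have hterm : ∀ π : Equiv.Perm (Fin n),
      (Matrix.of fun i j : Fin n => u i ^ (muF n l (π j))).det * ∏ j, v j ^ (muF n l (π j))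
        = (Matrix.of fun i j : Fin n => u i ^ (muF n l j)).det
          * (((Equiv.Perm.sign π : ℤ) : ℝ) * ∏ j, v (π.symm j) ^ (muF n l j)) := by
    intro π
    have h1 : (Matrix.of fun i j : Fin n => u i ^ (muF n l (π j)))
        = (Matrix.of fun i j : Fin n => u i ^ (muF n l j)).submatrix id π := rfl
    have h2 : (∏ j, v j ^ (muF n l (π j))) = ∏ j, v (π.symm j) ^ (muF n l j) := by
      rw [← Equiv.prod_comp π (fun j => v (π.symm j) ^ (muF n l j))]
      simp
    rw [h1, Matrix.det_permute', h2]
    push_cast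
    ring
  rw [Finset.sum_congr rfl (fun π _ => hterm π), ← Finset.mul_sum]
  congr 1
  rw [← Equiv.sum_comp (Equiv.inv (Equiv.Perm (Fin n)))
    (fun π => ((Equiv.Perm.sign π : ℤ) : ℝ) * ∏ j, v (π.symm j) ^ (muF n l j))]
  rw [Matrix.det_apply']
  refine Finset.sum_congr rfl fun π _ => ?_
  simp [Equiv.Perm.sign_inv, Equiv.Perm.inv_def]

lemma hasSum_schur_numerators (n : ℕ) (u v : Fin n → ℝ)
    (hu0 : ∀ i, 0 < u i) (hu1 : ∀ i, u i < 1) (hv0 : ∀ i, 0 < v i) (hv1 : ∀ i, v i < 1) :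
    HasSum (fun l : {l : Fin n → ℕ // Antitone l} =>
        (Matrix.of fun i j : Fin n => u i ^ (muF n l.val j)).det
          * (Matrix.of fun i j : Fin n => v i ^ (muF n l.val j)).det)
      ((Matrix.of fun i j : Fin n => (1 - u i * v j)⁻¹).det) := by
  classical
  have h1 := hasSum_detPow n u v hu0 hu1 hv0 hv1
  have hsupp : Function.support
      (fun k : Fin n → ℕ => (Matrix.of fun i j : Fin n => u i ^ k j).det * ∏ j, v j ^ k j)
      ⊆ {k : Fin n → ℕ | Function.Injective k} := by
    intro k hk
    by_contra hnk
    apply hk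
    have : (Matrix.of fun i j : Fin n => u i ^ k j).det = 0 := by
      simp only [Set.mem_setOf_eq] at hnk
      rw [Function.not_injective_iff] at hnk
      obtain ⟨a, b, hab, hne⟩ := hnk
      exact Matrix.det_zero_of_column_eq hne (fun i => by simp [hab])
    simp [this]
  rw [← hasSum_subtype_iff_of_support_subset hsupp] at h1
  replace h1 := (Equiv.hasSum_iff (Equiv.ofBijective _ (toInj_bijective n))).2 h1
  refine HasSum.prod_fiberwise h1 fun l => ?_
  have hfin := hasSum_fintype (fun π : Equiv.Perm (Fin n) =>
      (Matrix.of fun i j : Fin n => u i ^ ((muF n l.val ∘ π) j)).det * ∏ j, v j ^ ((muF n l.val ∘ π) j))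
  have hkey := perm_fiber_sum n u v l.val
  rw [show (∑ π : Equiv.Perm (Fin n),
      (Matrix.of fun i j : Fin n => u i ^ ((muF n l.val ∘ π) j)).det * ∏ j, v j ^ ((muF n l.val ∘ π) j))
      = (Matrix.of fun i j : Fin n => u i ^ (muF n l.val j)).det
        * (Matrix.of fun i j : Fin n => v i ^ (muF n l.val j)).det from hkey] at hfin
  exact hfin

lemma cauchy_det : ∀ (n : ℕ) (u v : Fin n → ℝ), (∀ i j, 1 - u i * v j ≠ 0) →
    (Matrix.of fun i j : Fin n => (1 - u i * v j)⁻¹).det =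
      (∏ i, ∏ j, (1 - u i * v j)⁻¹) *
        ((∏ i : Fin n, ∏ j ∈ Ioi i, (u j - u i)) * (∏ i : Fin n, ∏ j ∈ Ioi i, (v j - v i))) := by
  intro n
  induction n with
  | zero => intro u v h; simp [Matrix.det_fin_zero]
  | succ n ih =>
    intro u v h
    set B : Matrix (Fin (n+1)) (Fin (n+1)) ℝ := Matrix.of fun i j =>
      if i = 0 then (1 - u 0 * v j)⁻¹
      else (u i - u 0) * v j * ((1 - u i * v j)⁻¹ * (1 - u 0 * v j)⁻¹) with hB
    set B₂ : Matrix (Fin (n+1)) (Fin (n+1)) ℝ := Matrix.of fun i j =>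
      if i = 0 then 1 else v j * (1 - u i * v j)⁻¹ with hB₂
    set B₃ : Matrix (Fin (n+1)) (Fin (n+1)) ℝ := Matrix.of fun i j =>
      if i = 0 then (if j = 0 then 1 else 0)
      else (if j = 0 then v 0 * (1 - u i * v 0)⁻¹
        else (v j - v 0) * ((1 - u i * v j)⁻¹ * (1 - u i * v 0)⁻¹)) with hB₃
    set B₄ : Matrix (Fin (n+1)) (Fin (n+1)) ℝ := Matrix.of fun i j =>
      if i = 0 then (if j = 0 then 1 else 0)
      else (if j = 0 then v 0 else (1 - u i * v j)⁻¹) with hB₄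
    have hAB : (Matrix.of fun i j : Fin (n+1) => (1 - u i * v j)⁻¹).det = B.det := by
      refine Matrix.det_eq_of_forall_row_eq_smul_add_const
        (fun i => if i = 0 then 0 else 1) 0 (by simp) ?_
      intro i j
      by_cases hi : i = 0
      · subst hi; simp [hB]
      · simp only [hB, Matrix.of_apply, if_neg hi, if_true]
        have h1 := h i j
        have h2 := h 0 j
        have h1' : 1 - v j * u i ≠ 0 := by rw [mul_comm]; exact h1
        have h2' : 1 - v j * u 0 ≠ 0 := by rw [mul_comm]; exact h2
        field_simp
        ring
    have hBfact : B.det = (∏ i : Fin (n+1), (if i = 0 then 1 else u i - u 0))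
        * ((∏ j : Fin (n+1), (1 - u 0 * v j)⁻¹) * B₂.det) := by
      have hfact : B = Matrix.of fun i j => (if i = 0 then 1 else u i - u 0) *
          ((Matrix.of fun i j : Fin (n+1) => (1 - u 0 * v j)⁻¹ * B₂ i j) i j) := by
        ext i j
        by_cases hi : i = 0 <;> simp [hB, hB₂, hi] <;> ring
      rw [hfact, Matrix.det_mul_column, Matrix.det_mul_row]
    have hB23 : B₂.det = B₃.det := by
      rw [← Matrix.det_transpose B₂, ← Matrix.det_transpose B₃]
      refine Matrix.det_eq_of_forall_row_eq_smul_add_const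
        (fun j => if j = 0 then 0 else 1) 0 (by simp) ?_
      intro j i
      show B₂ i j = B₃ i j + (if j = 0 then (0:ℝ) else 1) * B₃ i 0
      by_cases hj : j = 0
      · subst hj
        by_cases hi : i = 0 <;> simp [hB₂, hB₃, hi]
      · by_cases hi : i = 0
        · subst hi; simp [hB₂, hB₃, hj]
        · simp only [hB₂, hB₃, Matrix.of_apply, if_neg hi, if_neg hj, if_pos rfl, if_true]
          have h1 := h i j
          have h2 := h i 0
          have h1' : 1 - v j * u i ≠ 0 := by rw [mul_comm]; exact h1
          have h2' : 1 - v 0 * u i ≠ 0 := by rw [mul_comm]; exact h2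
          field_simp
          ring
    have hB34 : B₃.det = (∏ i : Fin (n+1), (if i = 0 then 1 else (1 - u i * v 0)⁻¹))
        * ((∏ j : Fin (n+1), (if j = 0 then 1 else v j - v 0)) * B₄.det) := by
      have hfact : B₃ = Matrix.of fun i j => (if i = 0 then 1 else (1 - u i * v 0)⁻¹) *
          ((Matrix.of fun i j : Fin (n+1) => (if j = 0 then 1 else v j - v 0) * B₄ i j) i j) := by
        ext i j
        by_cases hi : i = 0 <;> by_cases hj : j = 0 <;> simp [hB₃, hB₄, hi, hj] <;> ring
      rw [hfact, Matrix.det_mul_column, Matrix.det_mul_row]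
    have hB4 : B₄.det = (Matrix.of fun i j : Fin n => (1 - u i.succ * v j.succ)⁻¹).det := by
      rw [Matrix.det_succ_row_zero]
      rw [Finset.sum_eq_single 0]
      · have hsub : (B₄.submatrix Fin.succ (Fin.succAbove 0)) =
            (Matrix.of fun i j : Fin n => (1 - u i.succ * v j.succ)⁻¹) := by
          ext i j
          simp [hB₄, Fin.succ_ne_zero, Fin.succAbove_zero]
        rw [hsub]
        simp [hB₄]
      · intro j _ hj
        simp [hB₄, if_neg hj]
      · intro hmem
        simp at hmem
    rw [hAB, hBfact, hB23, hB34, hB4,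
      ih (fun i => u i.succ) (fun j => v j.succ) (fun i j => h _ _)]
    simp only [Fin.prod_univ_succ, Fin.prod_Ioi_zero, Fin.prod_Ioi_succ, Fin.succ_ne_zero,
      if_true, if_false, ite_true, ite_false, eq_self_iff_true, one_mul, Finset.prod_mul_distrib]
    ring

lemma denom_eq (n : ℕ) (w : Fin n → ℝ) :
    (Matrix.of fun i j : Fin n => w i ^ (n - 1 - j.val)).det
      = ((Equiv.Perm.sign (Fin.revPerm : Equiv.Perm (Fin n)) : ℤ) : ℝ)
          * (Matrix.vandermonde w).det := by
  have heq : (Matrix.of fun i j : Fin n => w i ^ (n - 1 - j.val))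
      = (Matrix.vandermonde w).submatrix id (Fin.revPerm : Equiv.Perm (Fin n)) := by
    ext i j
    simp only [Matrix.of_apply, Matrix.submatrix_apply, id_eq, Matrix.vandermonde_apply,
      Fin.revPerm_apply, Fin.val_rev]
    congr 1
    omega
  rw [heq, Matrix.det_permute']

/-- The bialternant Schur polynomial value: for a partition `lam` with at most
`n` parts (a weakly decreasing `lam : Fin n → ℕ`) and variables `w : Fin n → ℝ`,
`s_lam(w) = det(w_i^{lam_j + n − 1 − j}) / det(w_i^{n − 1 − j})`. -/
noncomputable def schurVal (n : ℕ) (lam : Fin n → ℕ) (w : Fin n → ℝ) : ℝ :=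
  (Matrix.of fun i j : Fin n => w i ^ (lam j + n - 1 - j.val)).det /
    (Matrix.of fun i j : Fin n => w i ^ (n - 1 - j.val)).det

/-- Cauchy identity: for tuples `u, v` of pairwise distinct reals in `(0,1)`,
the family `(s_λ(u)·s_λ(v))`, indexed by all weakly decreasing `λ : Fin n → ℕ`,
is summable with sum `∏_{i,j} (1 − u_i v_j)^{−1}`. -/
theorem cauchy_identity_schur (n : ℕ) (hn : 1 ≤ n) (u v : Fin n → ℝ)
    (hu : Function.Injective u) (hv : Function.Injective v)
    (hu1 : ∀ i, 0 < u i ∧ u i < 1) (hv1 : ∀ i, 0 < v i ∧ v i < 1) :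
    HasSum (fun lam : {l : Fin n → ℕ // Antitone l} =>
        schurVal n lam.val u * schurVal n lam.val v)
      (∏ i : Fin n, ∏ j : Fin n, (1 - u i * v j)⁻¹) := by
  classical
  have hu0 : ∀ i, 0 < u i := fun i => (hu1 i).1
  have hu1' : ∀ i, u i < 1 := fun i => (hu1 i).2
  have hv0 : ∀ i, 0 < v i := fun i => (hv1 i).1
  have hv1' : ∀ i, v i < 1 := fun i => (hv1 i).2
  have hne : ∀ i j, 1 - u i * v j ≠ 0 := by
    intro i j
    have : u i * v j < 1 := by nlinarith [hu0 i, hu1' i, hv0 j, hv1' j]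
    intro hc
    nlinarith
  set Du := (Matrix.of fun i j : Fin n => u i ^ (n - 1 - j.val)).det with hDu
  set Dv := (Matrix.of fun i j : Fin n => v i ^ (n - 1 - j.val)).det with hDv
  have hVu : (Matrix.vandermonde u).det ≠ 0 := Matrix.det_vandermonde_ne_zero_iff.2 hu
  have hVv : (Matrix.vandermonde v).det ≠ 0 := Matrix.det_vandermonde_ne_zero_iff.2 hv
  have hsgn : ((Equiv.Perm.sign (Fin.revPerm : Equiv.Perm (Fin n)) : ℤ) : ℝ)
      * ((Equiv.Perm.sign (Fin.revPerm : Equiv.Perm (Fin n)) : ℤ) : ℝ) = 1 := by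
    rcases Int.units_eq_one_or (Equiv.Perm.sign (Fin.revPerm : Equiv.Perm (Fin n))) with h | h <;>
      rw [h] <;> norm_num
  have hDuv : Du * Dv = (Matrix.vandermonde u).det * (Matrix.vandermonde v).det := by
    rw [hDu, hDv, denom_eq, denom_eq]
    calc ((Equiv.Perm.sign (Fin.revPerm : Equiv.Perm (Fin n)) : ℤ) : ℝ) * (Matrix.vandermonde u).det
        * (((Equiv.Perm.sign (Fin.revPerm : Equiv.Perm (Fin n)) : ℤ) : ℝ) * (Matrix.vandermonde v).det)
        = (((Equiv.Perm.sign (Fin.revPerm : Equiv.Perm (Fin n)) : ℤ) : ℝ)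
            * ((Equiv.Perm.sign (Fin.revPerm : Equiv.Perm (Fin n)) : ℤ) : ℝ))
          * ((Matrix.vandermonde u).det * (Matrix.vandermonde v).det) := by ring
      _ = (Matrix.vandermonde u).det * (Matrix.vandermonde v).det := by rw [hsgn, one_mul]
  have hDune : Du ≠ 0 := by
    rw [hDu, denom_eq]
    refine mul_ne_zero ?_ hVu
    rcases Int.units_eq_one_or (Equiv.Perm.sign (Fin.revPerm : Equiv.Perm (Fin n))) with h | h <;>
      rw [h] <;> norm_num
  have hDvne : Dv ≠ 0 := by
    rw [hDv, denom_eq]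
    refine mul_ne_zero ?_ hVv
    rcases Int.units_eq_one_or (Equiv.Perm.sign (Fin.revPerm : Equiv.Perm (Fin n))) with h | h <;>
      rw [h] <;> norm_num
  have hnum := hasSum_schur_numerators n u v hu0 hu1' hv0 hv1'
  have hdiv := hnum.div_const (Du * Dv)
  have hfun : (fun l : {l : Fin n → ℕ // Antitone l} =>
      (Matrix.of fun i j : Fin n => u i ^ (muF n l.val j)).det
        * (Matrix.of fun i j : Fin n => v i ^ (muF n l.val j)).det / (Du * Dv))
      = fun l : {l : Fin n → ℕ // Antitone l} =>
        schurVal n l.val u * schurVal n l.val v := by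
    funext l
    have hexp : ∀ j : Fin n, l.val j + n - 1 - j.val = muF n l.val j := by
      intro j
      have := j.isLt
      simp only [muF]
      omega
    have hUe : (Matrix.of fun i j : Fin n => u i ^ (l.val j + n - 1 - j.val))
        = (Matrix.of fun i j : Fin n => u i ^ (muF n l.val j)) := by
      ext i j; simp only [Matrix.of_apply]; rw [hexp j]
    have hVe : (Matrix.of fun i j : Fin n => v i ^ (l.val j + n - 1 - j.val))
        = (Matrix.of fun i j : Fin n => v i ^ (muF n l.val j)) := by
      ext i j; simp only [Matrix.of_apply]; rw [hexp j]
    rw [schurVal, schurVal, hUe, hVe, ← hDu, ← hDv, div_mul_div_comm]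
  rw [hfun] at hdiv
  have hval : (Matrix.of fun i j : Fin n => (1 - u i * v j)⁻¹).det / (Du * Dv)
      = ∏ i : Fin n, ∏ j : Fin n, (1 - u i * v j)⁻¹ := by
    rw [cauchy_det n u v hne, hDuv, Matrix.det_vandermonde, Matrix.det_vandermonde,
      mul_div_assoc, div_self, mul_one]
    rw [← Matrix.det_vandermonde u, ← Matrix.det_vandermonde v]
    exact mul_ne_zero hVu hVv
  rw [hval] at hdiv
  exact hdiv
end
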